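/- arXiv:1311.3571 — 4 statements merged into one kernel-verified Lean document; each statement's English description precedes it below -/
import Mathlib

section
/- For every integer k ≥ 1, the ideal I_k is contained in the K-linear space W_k; that is, the two-sided ideal of A generated by W(k, 2·100^{k²}) is contained in Σ_{m≥0} A(m·100^{k²})·W(k,100^{k²})·A^1. -/
noncomputable section

/-- `A¹`: the free unital associative algebra over `K` on generators `x_0, x_1, x_2, …`,
realized as the monoid algebra of the free monoid on `ℕ`.  The free *non-unital*
algebra `A` sits inside it as the span of the monomials of positive length. -/
abbrev FA (K : Type) [Field K] : Type := MonoidAlgebra K (FreeMonoid ℕ)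

/-- The monomial `x_{i₁} x_{i₂} ⋯ x_{iₙ}` corresponding to the list `[i₁, …, iₙ]`. -/
def mon (K : Type) [Field K] (l : List ℕ) : FA K :=
  MonoidAlgebra.single (FreeMonoid.ofList l) 1

/-- The generator `x_i`. -/
def xg (K : Type) [Field K] (i : ℕ) : FA K := mon K [i]

/-- `A(n)`: the `K`-linear span of the monomials of length `n`. -/
def Agr (K : Type) [Field K] (n : ℕ) : Submodule K (FA K) :=
  Submodule.span K {a | ∃ l : List ℕ, l.length = n ∧ a = mon K l}

/-- The free non-unital algebra `A`: the span of monomials of positive length. -/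
def Apos (K : Type) [Field K] : Submodule K (FA K) :=
  Submodule.span K {a | ∃ l : List ℕ, l ≠ [] ∧ a = mon K l}

/-- `D` is the `K`-derivation with `D(x_i) = x_{i+1}` for every `i`. -/
def IsDer (K : Type) [Field K] (D : FA K →ₗ[K] FA K) : Prop :=
  (∀ a b : FA K, D (a * b) = D a * b + a * D b) ∧ ∀ i : ℕ, D (xg K i) = xg K (i + 1)

/-- `W(k, n, t)`:  `W(k,n,0)` is the set of monomials of length `n` in the letters
`x_0, …, x_{k-1}`, and `W(k,n,t+1) = D(W(k,n,t))`. -/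
def WsetL (K : Type) [Field K] (D : FA K →ₗ[K] FA K) (k n : ℕ) : ℕ → Set (FA K)
  | 0 => {a | ∃ l : List ℕ, l.length = n ∧ (∀ i ∈ l, i < k) ∧ a = mon K l}
  | t + 1 => D '' WsetL K D k n t

/-- `W(k, n) = ⋃ₜ W(k, n, t)`. -/
def Wset (K : Type) [Field K] (D : FA K →ₗ[K] FA K) (k n : ℕ) : Set (FA K) :=
  ⋃ t, WsetL K D k n t

/-- `I_k`: the two-sided ideal of `A` generated by `W(k, 2·100^{k²})`. -/
def Ik (K : Type) [Field K] (D : FA K →ₗ[K] FA K) (k : ℕ) : Submodule K (FA K) :=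
  Submodule.span K
    {a | ∃ u v w : FA K, w ∈ Wset K D k (2 * 100 ^ (k ^ 2)) ∧ a = u * w * v}

/-- `I = Σ_{k > 0} I_k`. -/
def Itot (K : Type) [Field K] (D : FA K →ₗ[K] FA K) : Submodule K (FA K) :=
  ⨆ k : ℕ, ⨆ _ : 1 ≤ k, Ik K D k

/-- `W_k = Σ_{m ≥ 0} A(m·100^{k²}) · W(k, 100^{k²}) · A¹`. -/
def Wk (K : Type) [Field K] (D : FA K →ₗ[K] FA K) (k : ℕ) : Submodule K (FA K) :=
  Submodule.span K {a | ∃ (l : List ℕ) (w v : FA K),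
    (∃ m : ℕ, l.length = m * 100 ^ (k ^ 2)) ∧ w ∈ Wset K D k (100 ^ (k ^ 2)) ∧
    a = mon K l * w * v}

/-- The set `Z_k`.  Here the letter of a monomial `s` in (1-indexed) position
`j` is `l[j-1]?` for the corresponding list `l`. -/
def Zset (K : Type) [Field K] (k : ℕ) : Set (FA K) :=
  {a | (∃ (κ : K) (l : List ℕ) (p q : ℕ), p < q ∧ q ≤ k ∧
          l.length = 100 ^ (k ^ 2) - 1 ∧
          l[3 ^ p * 100 ^ ((k - 1) ^ 2) - 1]? = l[3 ^ q * 100 ^ ((k - 1) ^ 2) - 1]? ∧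
          a = κ • mon K l) ∨
      (∃ (κ : K) (l₁ l₂ : List ℕ) (p q e₁ e₂ : ℕ), p < q ∧ q ≤ k ∧ e₂ < e₁ ∧ 0 < e₂ ∧
          l₁.length = 100 ^ (k ^ 2) - 1 ∧ l₂.length = 100 ^ (k ^ 2) - 1 ∧
          l₁[3 ^ p * 100 ^ ((k - 1) ^ 2) - 1]? = some e₁ ∧
          l₁[3 ^ q * 100 ^ ((k - 1) ^ 2) - 1]? = some e₂ ∧
          l₂[3 ^ p * 100 ^ ((k - 1) ^ 2) - 1]? = some e₂ ∧
          l₂[3 ^ q * 100 ^ ((k - 1) ^ 2) - 1]? = some e₁ ∧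
          (∀ j : ℕ, j + 1 ≠ 3 ^ p * 100 ^ ((k - 1) ^ 2) →
            j + 1 ≠ 3 ^ q * 100 ^ ((k - 1) ^ 2) → l₁[j]? = l₂[j]?) ∧
          a = κ • (mon K l₁ + mon K l₂))}

/-- `B_k = Σ_{m ≥ 0} A(m·100^{k²}) · Z_k · A¹`. -/
def Bk (K : Type) [Field K] (k : ℕ) : Submodule K (FA K) :=
  Submodule.span K {a | ∃ (l : List ℕ) (z v : FA K),
    (∃ m : ℕ, l.length = m * 100 ^ (k ^ 2)) ∧ z ∈ Zset K k ∧ a = mon K l * z * v}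

/-- `B_1 + B_2 + ⋯ + B_k`. -/
def Bsum (K : Type) [Field K] (k : ℕ) : Submodule K (FA K) :=
  ∑ i ∈ Finset.Icc 1 k, Bk K i

/-- The coefficients `a_j^{(m)}` of `(x_0 X)^m = Σ_j a_j^{(m)} X^j` in `A¹[X; D]`:
`a_0^{(0)} = 1`, `a_j^{(0)} = 0` for `j > 0`, and
`a_j^{(m+1)} = x_0 (a_{j-1}^{(m)} + D(a_j^{(m)}))` (with `a_{-1}^{(m)} = 0`). -/
def acoef (K : Type) [Field K] (D : FA K →ₗ[K] FA K) : ℕ → ℕ → FA K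
  | 0, 0 => 1
  | 0, _ + 1 => 0
  | m + 1, 0 => xg K 0 * D (acoef K D m 0)
  | m + 1, j + 1 => xg K 0 * (acoef K D m j + D (acoef K D m (j + 1)))




section AuxIkWk

variable (K : Type) [Field K] (D : FA K →ₗ[K] FA K)

lemma mon_append (l₁ l₂ : List ℕ) : mon K (l₁ ++ l₂) = mon K l₁ * mon K l₂ := by
  unfold mon
  rw [MonoidAlgebra.single_mul_single, one_mul]
  rfl

lemma mon_nil : mon K [] = 1 := rfl

lemma D_one (hD : IsDer K D) : D 1 = 0 := by
  have h := hD.1 1 1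
  rw [one_mul, mul_one, one_mul] at h
  simpa using h

lemma mon_mul_mem (l : List ℕ) {n : ℕ} {y : FA K} (hy : y ∈ Agr K n) :
    mon K l * y ∈ Agr K (l.length + n) := by
  refine Submodule.span_induction
    (p := fun y _ => mon K l * y ∈ Agr K (l.length + n)) ?_ ?_ ?_ ?_ hy
  · rintro z ⟨l', hl', rfl⟩
    rw [← mon_append]
    exact Submodule.subset_span ⟨l ++ l', by simp [hl'], rfl⟩
  · simpa using (Agr K (l.length + n)).zero_mem
  · intro x y _ _ hx hy
    rw [mul_add]; exact add_mem hx hy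
  · intro c x _ hx
    rw [mul_smul_comm]; exact Submodule.smul_mem _ _ hx

lemma D_mon_mem (hD : IsDer K D) (l : List ℕ) : D (mon K l) ∈ Agr K l.length := by
  induction l with
  | nil =>
      rw [mon_nil, D_one K D hD]
      exact (Agr K 0).zero_mem
  | cons a l ih =>
      have h1 : mon K (a :: l) = xg K a * mon K l := by
        have : (a :: l) = [a] ++ l := rfl
        rw [this, mon_append]; rfl
      rw [h1, hD.1, hD.2]
      refine add_mem ?_ ?_
      · have h2 : xg K (a+1) * mon K l = mon K ((a+1) :: l) := by
          have : ((a+1) :: l) = [a+1] ++ l := rfl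
          rw [this, mon_append]; rfl
        rw [h2]
        exact Submodule.subset_span ⟨(a+1) :: l, by simp, rfl⟩
      · have := mon_mul_mem K [a] ih
        simpa [Nat.add_comm, xg] using this

lemma D_Agr (hD : IsDer K D) {n : ℕ} {y : FA K} (hy : y ∈ Agr K n) : D y ∈ Agr K n := by
  refine Submodule.span_induction (p := fun y _ => D y ∈ Agr K n) ?_ ?_ ?_ ?_ hy
  · rintro z ⟨l, hl, rfl⟩
    exact hl ▸ D_mon_mem K D hD l
  · simpa using (Agr K n).zero_mem
  · intro x y _ _ hx hy
    rw [map_add]; exact add_mem hx hy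
  · intro c x _ hx
    rw [map_smul]; exact Submodule.smul_mem _ _ hx

lemma iterD_Agr (hD : IsDer K D) (i : ℕ) {n : ℕ} {y : FA K} (hy : y ∈ Agr K n) :
    D^[i] y ∈ Agr K n := by
  induction i with
  | zero => exact hy
  | succ i ih =>
      rw [Function.iterate_succ_apply']
      exact D_Agr K D hD ih

lemma iter_D_mul3_mem (hD : IsDer K D) (t : ℕ) (a b c : FA K) :
    D^[t] (a * b * c) ∈ Submodule.span K
      {z | ∃ i j h, i + j + h = t ∧ z = D^[i] a * D^[j] b * D^[h] c} := by
  induction t with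
  | zero => exact Submodule.subset_span ⟨0, 0, 0, rfl, rfl⟩
  | succ t ih =>
      rw [Function.iterate_succ_apply']
      refine Submodule.span_induction
        (p := fun y _ => D y ∈ Submodule.span K
          {z | ∃ i j h, i + j + h = t + 1 ∧ z = D^[i] a * D^[j] b * D^[h] c})
        ?_ ?_ ?_ ?_ ih
      · rintro x ⟨i, j, h, hijh, rfl⟩
        rw [hD.1, hD.1, add_mul]
        refine add_mem (add_mem ?_ ?_) ?_
        · exact Submodule.subset_span
            ⟨i+1, j, h, by omega, by rw [Function.iterate_succ_apply']⟩
        · exact Submodule.subset_span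
            ⟨i, j+1, h, by omega, by rw [Function.iterate_succ_apply']⟩
        · exact Submodule.subset_span
            ⟨i, j, h+1, by omega, by rw [Function.iterate_succ_apply']⟩
      · simpa using (Submodule.span K _).zero_mem
      · intro x y _ _ hx hy
        rw [map_add]; exact add_mem hx hy
      · intro c' x _ hx
        rw [map_smul]; exact Submodule.smul_mem _ _ hx

lemma span_mon_top (f : FA K) :
    f ∈ Submodule.span K {a : FA K | ∃ l : List ℕ, a = mon K l} := by
  induction f using MonoidAlgebra.induction with
  | zero => exact zero_mem _
  | single_add g b f _ _ ih =>
      refine add_mem ?_ ih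
      have h1 : (MonoidAlgebra.single g b : FA K) = b • mon K g.toList := by
        unfold mon
        rw [FreeMonoid.ofList_toList]
        rw [MonoidAlgebra.smul_single', mul_one]
      rw [h1]
      exact Submodule.smul_mem _ _ (Submodule.subset_span ⟨g.toList, rfl⟩)

lemma mem_wsetl (k n : ℕ) (l : List ℕ) (hlen : l.length = n) (hlt : ∀ i ∈ l, i < k) :
    ∀ j, D^[j] (mon K l) ∈ WsetL K D k n j
  | 0 => ⟨l, hlen, hlt, rfl⟩
  | j + 1 => by
      rw [Function.iterate_succ_apply']
      exact ⟨_, mem_wsetl k n l hlen hlt j, rfl⟩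

lemma wsetl_elim (k n : ℕ) :
    ∀ t, ∀ w ∈ WsetL K D k n t,
      ∃ l : List ℕ, l.length = n ∧ (∀ i ∈ l, i < k) ∧ w = D^[t] (mon K l)
  | 0, w, ⟨l, h1, h2, h3⟩ => ⟨l, h1, h2, h3⟩
  | t + 1, w, hw => by
      obtain ⟨w', hw', rfl⟩ := hw
      obtain ⟨l, h1, h2, rfl⟩ := wsetl_elim k n t w' hw'
      exact ⟨l, h1, h2, (Function.iterate_succ_apply' D t _).symm⟩

lemma key_mon (hD : IsDer K D) (k : ℕ) (hk : 1 ≤ k) (l l0 : List ℕ) (t : ℕ) (v : FA K)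
    (hl0len : l0.length = 2 * 100 ^ (k ^ 2)) (hl0lt : ∀ i ∈ l0, i < k) :
    mon K l * D^[t] (mon K l0) * v ∈ Wk K D k := by
  set N := 100 ^ (k ^ 2) with hNdef
  have hN : 0 < N := Nat.pow_pos (by norm_num)
  set r := l.length with hr
  set s := r % N with hs
  set m := r / N with hm
  have hsN : s < N := Nat.mod_lt _ hN
  have hdm : N * m + s = r := Nat.div_add_mod r N
  set l1 := l0.take (N - s) with hl1
  set l2 := (l0.drop (N - s)).take N with hl2
  set l3 := (l0.drop (N - s)).drop N with hl3
  have hsplit : l0 = l1 ++ (l2 ++ l3) := by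
    rw [hl1, hl2, hl3, List.take_append_drop, List.take_append_drop]
  have hlen1 : l1.length = N - s := by
    rw [hl1, List.length_take, hl0len]; omega
  have hlen2 : l2.length = N := by
    rw [hl2, List.length_take, List.length_drop, hl0len]; omega
  have hl2lt : ∀ i ∈ l2, i < k := by
    intro i hi
    refine hl0lt i ?_
    rw [hsplit]
    simp only [List.mem_append]
    exact Or.inr (Or.inl hi)
  have hmon : mon K l0 = mon K l1 * mon K l2 * mon K l3 := by
    rw [hsplit, mon_append, mon_append, mul_assoc]
  rw [hmon]
  have hmem := iter_D_mul3_mem K D hD t (mon K l1) (mon K l2) (mon K l3)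
  refine Submodule.span_induction
    (p := fun z _ => mon K l * z * v ∈ Wk K D k) ?_ ?_ ?_ ?_ hmem
  · rintro z ⟨i, j, h, hijh, rfl⟩
    have e : mon K l * (D^[i] (mon K l1) * D^[j] (mon K l2) * D^[h] (mon K l3)) * v =
        (mon K l * D^[i] (mon K l1)) * D^[j] (mon K l2) * (D^[h] (mon K l3) * v) := by
      simp only [mul_assoc]
    rw [e]
    have hleft : mon K l * D^[i] (mon K l1) ∈ Agr K (r + (N - s)) := by
      refine mon_mul_mem K l ?_
      have : D^[i] (mon K l1) ∈ Agr K l1.length :=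
        iterD_Agr K D hD i (Submodule.subset_span ⟨l1, rfl, rfl⟩)
      rwa [hlen1] at this
    have hrN : r + (N - s) = (m + 1) * N := by
      have h2 : (m + 1) * N = N * m + N := by ring
      omega
    have hWmem : D^[j] (mon K l2) ∈ Wset K D k N := by
      rw [Wset]
      exact Set.mem_iUnion.mpr ⟨j, mem_wsetl K D k N l2 hlen2 hl2lt j⟩
    refine Submodule.span_induction
      (p := fun y _ => y * D^[j] (mon K l2) * (D^[h] (mon K l3) * v) ∈ Wk K D k)
      ?_ ?_ ?_ ?_ hleft
    · rintro y ⟨l', hl', rfl⟩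
      exact Submodule.subset_span
        ⟨l', D^[j] (mon K l2), D^[h] (mon K l3) * v, ⟨m + 1, by rw [hl', hrN]⟩, hWmem, rfl⟩
    · simpa using (Wk K D k).zero_mem
    · intro x y _ _ hx hy
      rw [add_mul, add_mul]; exact add_mem hx hy
    · intro c x _ hx
      rw [smul_mul_assoc, smul_mul_assoc]; exact Submodule.smul_mem _ _ hx
  · simpa using (Wk K D k).zero_mem
  · intro x y _ _ hx hy
    rw [mul_add, add_mul]; exact add_mem hx hy
  · intro c x _ hx
    rw [mul_smul_comm, smul_mul_assoc]; exact Submodule.smul_mem _ _ hx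

end AuxIkWk

/-- Lemma 1: for any `k ≥ 1`, the ideal `I_k` is contained in `W_k`. -/
theorem Ik_subset_Wk (K : Type) [Field K] (D : FA K →ₗ[K] FA K) (hD : IsDer K D)
    (k : ℕ) (hk : 1 ≤ k) : Ik K D k ≤ Wk K D k := by
  rw [Ik, Submodule.span_le]
  rintro a ⟨u, v, w, hw, rfl⟩
  rw [Wset, Set.mem_iUnion] at hw
  obtain ⟨t, hw⟩ := hw
  obtain ⟨l0, hl0len, hl0lt, rfl⟩ := wsetl_elim K D k (2 * 100 ^ (k ^ 2)) t _ hw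
  have hu := span_mon_top K u
  refine Submodule.span_induction
    (p := fun u _ => u * D^[t] (mon K l0) * v ∈ Wk K D k) ?_ ?_ ?_ ?_ hu
  · rintro u ⟨l, rfl⟩
    exact key_mon K D hD k hk l l0 t v hl0len hl0lt
  · simpa using (Wk K D k).zero_mem
  · intro x y _ _ hx hy
    rw [add_mul, add_mul]; exact add_mem hx hy
  · intro c x _ hx
    rw [smul_mul_assoc, smul_mul_assoc]; exact Submodule.smul_mem _ _ hx
end
end

section
/- Let k ≥ 1 and let a_1, a_2, …, a_n ∈ A be such that for each i, a_i ∈ A(100^{k²}·p_i − 1) for some positive integer p_i, and a_i ∉ B_1 + … + B_k. Then for all non-negative integers m_1, …, m_n, the product a_1x_{m_1}a_2x_{m_2}⋯x_{m_{n−1}}a_nx_{m_n} does not belong to B_1 + … + B_k. -/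
noncomputable section

-- slice helpers
theorem slice_left {α : Type*} (l r : List α) (d t : ℕ) (h : d + t ≤ l.length) :
    ((l ++ r).drop d).take t = (l.drop d).take t := by
  rw [List.drop_append, List.take_append]
  have h1 : d - l.length = 0 := by omega
  have h2 : t - (l.drop d).length = 0 := by
    rw [List.length_drop]; omega
  rw [h1, h2]
  simp

theorem slice_right {α : Type*} (l r : List α) (d t : ℕ) (h : l.length ≤ d) :
    ((l ++ r).drop d).take t = (r.drop (d - l.length)).take t := by
  rw [List.drop_append, List.drop_eq_nil_of_le h]
  simp

theorem slice_mid {α : Type*} (l s u : List α) (d t : ℕ) (h1 : d ≤ l.length)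
    (h2 : l.length + s.length ≤ d + t) :
    ((l ++ s ++ u).drop d).take t
      = l.drop d ++ s ++ u.take (t - (l.length - d) - s.length) := by
  rw [List.append_assoc, List.drop_append,
    (by omega : d - l.length = 0), List.drop_zero,
    List.take_append,
    List.take_of_length_le (l := l.drop d) (by rw [List.length_drop]; omega),
    List.take_append,
    List.take_of_length_le (l := s) (by rw [List.length_drop]; omega),
    List.length_drop, List.append_assoc]

theorem find_block (g : ℕ → ℕ) (h0 : g 0 = 0) (hmono : ∀ t, g t ≤ g (t+1)) :
    ∀ {n x : ℕ}, x < g n → ∃ t, t < n ∧ g t ≤ x ∧ x < g (t+1) := by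
  intro n
  induction n with
  | zero => intro x hx; omega
  | succ n ih =>
    intro x hx
    by_cases h : x < g n
    · obtain ⟨t, ht, h1, h2⟩ := ih h
      exact ⟨t, by omega, h1, h2⟩
    · exact ⟨n, by omega, by omega, hx⟩

theorem mon_mul {K : Type} [Field K] (l₁ l₂ : List ℕ) :
    mon K l₁ * mon K l₂ = mon K (l₁ ++ l₂) := by
  rw [mon, mon, mon, MonoidAlgebra.single_mul_single, FreeMonoid.ofList_append, one_mul]

theorem mon_prod {K : Type} [Field K] (L : List (List ℕ)) :
    (L.map (mon K)).prod = mon K L.flatten := by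
  induction L with
  | nil => simp only [List.map_nil, List.prod_nil, List.flatten_nil, mon, MonoidAlgebra.one_def]; rfl
  | cons h t ih => simp only [List.map_cons, List.prod_cons, ih, mon_mul, List.flatten_cons]

theorem join_drop {α : Type*} : ∀ (L : List (List α)) (t : ℕ),
    L.flatten.drop (((L.take t).map List.length).sum) = (L.drop t).flatten := by
  intro L
  induction L with
  | nil => intro t; simp
  | cons h T ih =>
    intro t
    cases t with
    | zero => simp
    | succ t =>
      simp only [List.take_succ_cons, List.map_cons, List.sum_cons, List.flatten_cons,
        List.drop_succ_cons]
      rw [List.drop_append, List.drop_eq_nil_of_le (by omega),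
        List.nil_append]
      rw [(by omega : h.length + ((List.take t T).map List.length).sum - h.length
        = ((List.take t T).map List.length).sum), ih]

theorem exists_functional {K V : Type*} [Field K] [AddCommGroup V] [Module K V]
    (U : Submodule K V) {v : V} (hv : v ∉ U) :
    ∃ φ : V →ₗ[K] K, φ v = 1 ∧ ∀ b ∈ U, φ b = 0 := by
  have hne : (Submodule.Quotient.mk v : V ⧸ U) ≠ 0 := by
    rw [Ne, Submodule.Quotient.mk_eq_zero]; exact hv
  have := (Module.forall_dual_apply_eq_zero_iff K (Submodule.Quotient.mk v : V ⧸ U)).not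
  rw [not_forall] at this
  obtain ⟨ψ, hψ⟩ := this.mpr hne
  refine ⟨(ψ (Submodule.Quotient.mk v))⁻¹ • (ψ.comp U.mkQ), ?_, ?_⟩
  · simp only [LinearMap.smul_apply, LinearMap.comp_apply, Submodule.mkQ_apply]
    exact inv_mul_cancel₀ hψ
  · intro b hb
    simp only [LinearMap.smul_apply, LinearMap.comp_apply, Submodule.mkQ_apply]
    rw [(Submodule.Quotient.mk_eq_zero U).mpr hb, map_zero, smul_zero]

def qq (pp : ℕ → ℕ) (t : ℕ) : ℕ := ∑ j ∈ Finset.range t, pp j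

def blk (N : ℕ) (pp : ℕ → ℕ) (t : ℕ) (w : List ℕ) : List ℕ :=
  (w.drop (N * qq pp t)).take (N * pp t - 1)

def condW (N nn : ℕ) (pp mm : ℕ → ℕ) (w : List ℕ) : Prop :=
  w.length = N * qq pp nn ∧ ∀ t < nn, w[N * qq pp (t+1) - 1]? = some (mm t)

open Classical in
def ffn (K : Type) [Field K] (N nn : ℕ) (pp mm : ℕ → ℕ)
    (Φ : ℕ → (FA K →ₗ[K] K)) (w : FreeMonoid ℕ) : K :=
  if condW N nn pp mm (FreeMonoid.toList w)
  then ∏ t ∈ Finset.range nn, Φ t (mon K (blk N pp t (FreeMonoid.toList w))) else 0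

def FF (K : Type) [Field K] (N nn : ℕ) (pp mm : ℕ → ℕ)
    (Φ : ℕ → (FA K →ₗ[K] K)) : FA K →ₗ[K] K :=
  Finsupp.linearCombination K (ffn K N nn pp mm Φ) ∘ₗ
    (MonoidAlgebra.coeffLinearEquiv K : FA K ≃ₗ[K] (FreeMonoid ℕ →₀ K)).toLinearMap

theorem FF_mon (K : Type) [Field K] (N nn : ℕ) (pp mm : ℕ → ℕ)
    (Φ : ℕ → (FA K →ₗ[K] K)) (l : List ℕ) :
    FF K N nn pp mm Φ (mon K l) = ffn K N nn pp mm Φ (FreeMonoid.ofList l) := by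
  show Finsupp.linearCombination K (ffn K N nn pp mm Φ)
    (Finsupp.single (FreeMonoid.ofList l) (1:K)) = _
  rw [Finsupp.linearCombination_single, one_smul]

theorem qq_succ (pp : ℕ → ℕ) (t : ℕ) : qq pp (t+1) = qq pp t + pp t :=
  Finset.sum_range_succ pp t

theorem take_len {α : Type*} {nn : ℕ} (G : Fin nn → List α) (lenf : ℕ → ℕ)
    (hG : ∀ i : Fin nn, (G i).length = lenf i.val) :
    ∀ t, t ≤ nn → (((List.ofFn G).take t).map List.length).sum = ∑ j ∈ Finset.range t, lenf j := by
  intro t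
  induction t with
  | zero => intro _; simp
  | succ t ih =>
    intro ht
    rw [List.take_succ, List.map_append, List.sum_append, ih (by omega),
      Finset.sum_range_succ]
    congr 1
    have hlt : t < (List.ofFn G).length := by rw [List.length_ofFn]; omega
    rw [List.getElem?_eq_getElem hlt, List.getElem_ofFn]
    simp [hG ⟨t, by omega⟩]

section JoinFacts

variable {K : Type} [Field K] {N nn : ℕ} {pp mm : ℕ → ℕ} {Φ : ℕ → (FA K →ₗ[K] K)}
variable {ww : Fin nn → List ℕ}

theorem ffn_join (hN : 0 < N) (hpp : ∀ t, t < nn → 0 < pp t)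
    (hww : ∀ i : Fin nn, (ww i).length = N * pp i.val - 1) :
    ffn K N nn pp mm Φ
      (FreeMonoid.ofList (List.ofFn fun i : Fin nn => ww i ++ [mm i.val]).flatten)
      = ∏ i : Fin nn, Φ i (mon K (ww i)) := by
  set G : Fin nn → List ℕ := fun i => ww i ++ [mm i.val] with hG
  set W : List ℕ := (List.ofFn G).flatten with hW
  have hppos : ∀ t, t < nn → 1 ≤ N * pp t := fun t ht =>
    Nat.one_le_iff_ne_zero.mpr (Nat.mul_ne_zero (by omega) (by have := hpp t ht; omega))
  have hlenG : ∀ i : Fin nn, (G i).length = N * pp i.val := by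
    intro i
    rw [hG]
    simp only [List.length_append, List.length_singleton, hww i]
    have := hppos i.val i.isLt
    omega
  have hsum : ∀ t, t ≤ nn →
      (((List.ofFn G).take t).map List.length).sum = N * qq pp t := by
    intro t ht
    rw [take_len G (fun j => N * pp j) hlenG t ht, qq, Finset.mul_sum]
  have Wlen : W.length = N * qq pp nn := by
    rw [hW, List.length_flatten, ← List.take_of_length_le (i := nn)
      (le_of_eq (List.length_ofFn (f := G))), hsum nn le_rfl]
  have Wdrop : ∀ t (ht : t < nn), W.drop (N * qq pp t)
      = ww ⟨t, ht⟩ ++ ([mm t] ++ ((List.ofFn G).drop (t+1)).flatten) := by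
    intro t ht
    rw [← hsum t (by omega), hW, join_drop,
      List.drop_eq_getElem_cons (by rw [List.length_ofFn]; omega : t < (List.ofFn G).length),
      List.getElem_ofFn, List.flatten_cons, hG]
    simp [List.append_assoc]
  have hblk : ∀ t (ht : t < nn), blk N pp t W = ww ⟨t, ht⟩ := by
    intro t ht
    rw [blk, Wdrop t ht, List.take_append,
      List.take_of_length_le (by rw [hww ⟨t, ht⟩]),
      hww ⟨t, ht⟩, Nat.sub_self, List.take_zero, List.append_nil]
  have hget : ∀ t, t < nn → W[N * qq pp (t+1) - 1]? = some (mm t) := by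
    intro t ht
    have harith : N * qq pp (t+1) - 1 = N * qq pp t + (N * pp t - 1) := by
      rw [qq_succ, Nat.mul_add]
      have := hppos t ht
      omega
    rw [harith, ← List.getElem?_drop, Wdrop t ht,
      List.getElem?_append_right (by rw [hww ⟨t, ht⟩]),
      hww ⟨t, ht⟩, Nat.sub_self]
    simp
  have hcond : condW N nn pp mm (FreeMonoid.toList (FreeMonoid.ofList W)) := by
    exact ⟨Wlen, hget⟩
  rw [ffn, if_pos hcond]
  rw [show FreeMonoid.toList (FreeMonoid.ofList W) = W from rfl]
  rw [Finset.prod_range (fun t => Φ t (mon K (blk N pp t W)))]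
  exact Finset.prod_congr rfl fun i _ => by rw [hblk i.val i.isLt, Fin.eta]

theorem FF_prod (hN : 0 < N) (hpp : ∀ t, t < nn → 0 < pp t) (a : Fin nn → FA K)
    (hsupp : ∀ i : Fin nn, ∀ w ∈ (a i).coeff.support,
      (FreeMonoid.toList w).length = N * pp i.val - 1) :
    FF K N nn pp mm Φ ((List.ofFn fun i => a i * mon K [mm i.val]).prod)
      = ∏ i : Fin nn, Φ i (a i) := by
  set μ : MultilinearMap K (fun _ : Fin nn => FA K) K :=
    (FF K N nn pp mm Φ).compMultilinearMap
      ((MultilinearMap.mkPiAlgebraFin K nn (FA K)).compLinearMap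
        (fun i => LinearMap.mulRight K (mon K [mm i.val]))) with hμ
  have happ : ∀ b : Fin nn → FA K,
      μ b = FF K N nn pp mm Φ ((List.ofFn fun i => b i * mon K [mm i.val]).prod) := by
    intro b
    rw [hμ]
    rw [LinearMap.compMultilinearMap_apply, MultilinearMap.compLinearMap_apply,
      MultilinearMap.mkPiAlgebraFin_apply]
    simp only [LinearMap.mulRight_apply]
  have expand : ∀ i : Fin nn,
      a i = ∑ w ∈ (a i).coeff.support, (a i).coeff w • mon K (FreeMonoid.toList w) := by
    intro i
    conv_lhs => rw [← MonoidAlgebra.sum_coeff_single (a i)]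
    rw [Finsupp.sum]
    refine Finset.sum_congr rfl fun w _ => ?_
    rw [mon, FreeMonoid.ofList_toList]
    rw [MonoidAlgebra.smul_single', mul_one]
  have key : ∀ r : (i : Fin nn) → FreeMonoid ℕ, (∀ i, r i ∈ (a i).coeff.support) →
      μ (fun i => mon K (FreeMonoid.toList (r i)))
        = ∏ i : Fin nn, Φ i (mon K (FreeMonoid.toList (r i))) := by
    intro r hr
    rw [happ]
    have hfg : (fun i : Fin nn => mon K (FreeMonoid.toList (r i)) * mon K [mm i.val])
        = (mon K ∘ fun i : Fin nn => FreeMonoid.toList (r i) ++ [mm i.val]) :=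
      funext fun i => by rw [Function.comp_apply, mon_mul]
    rw [hfg, ← List.map_ofFn, mon_prod, FF_mon]
    exact ffn_join hN hpp fun i => hsupp i (r i) (hr i)
  have step1 : FF K N nn pp mm Φ ((List.ofFn fun i => a i * mon K [mm i.val]).prod)
      = μ (fun i => a i) := (happ (fun i => a i)).symm
  rw [step1, show (fun i => a i) = fun i => ∑ w ∈ (a i).coeff.support,
    (a i).coeff w • mon K (FreeMonoid.toList w) from funext expand,
    MultilinearMap.map_sum_finset μ (fun i w => (a i).coeff w • mon K (FreeMonoid.toList w))]
  have step2 : ∀ r ∈ Fintype.piFinset (fun i => (a i).coeff.support),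
      μ (fun i => (a i).coeff (r i) • mon K (FreeMonoid.toList (r i)))
        = ∏ i : Fin nn, ((a i).coeff (r i) * Φ i (mon K (FreeMonoid.toList (r i)))) := by
    intro r hr
    rw [MultilinearMap.map_smul_univ, key r (fun i => (Fintype.mem_piFinset.mp hr) i),
      smul_eq_mul, ← Finset.prod_mul_distrib]
  rw [Finset.sum_congr rfl step2, ← Finset.prod_univ_sum (fun i => (a i).coeff.support)
    (fun i w => (a i).coeff w * Φ i.val (mon K (FreeMonoid.toList w)))]
  refine Finset.prod_congr rfl fun i _ => ?_
  conv_rhs => rw [expand i]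
  rw [map_sum]
  exact Finset.sum_congr rfl fun w _ => by rw [map_smul, smul_eq_mul]


theorem pbound (k' : ℕ) (hk' : 1 ≤ k') {pz : ℕ} (hpz : pz ≤ k') :
    3 ^ pz * 100 ^ ((k' - 1) ^ 2) < 100 ^ (k' ^ 2) := by
  obtain ⟨j, rfl⟩ : ∃ j, k' = j + 1 := ⟨k' - 1, by omega⟩
  have h2 : j + 1 - 1 = j := rfl
  have h1 : (j + 1) ^ 2 = j ^ 2 + (2 * j + 1) := by ring
  rw [h2, h1, pow_add]
  have h3 : 3 ^ pz < 100 ^ (2 * j + 1) :=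
    lt_of_le_of_lt (Nat.pow_le_pow_right (by norm_num) (by omega))
      (Nat.pow_lt_pow_left (by norm_num) (by omega))
  calc 3 ^ pz * 100 ^ (j ^ 2) < 100 ^ (2 * j + 1) * 100 ^ (j ^ 2) :=
        mul_lt_mul_of_pos_right h3 (by positivity)
    _ = 100 ^ (j ^ 2) * 100 ^ (2 * j + 1) := Nat.mul_comm _ _

theorem qq_mono (pp : ℕ → ℕ) {t₁ t₂ : ℕ} (h : t₁ ≤ t₂) : qq pp t₁ ≤ qq pp t₂ :=
  Finset.sum_le_sum_of_subset (Finset.range_subset_range.mpr h)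

theorem block_decomp {N nn : ℕ} {pp : ℕ → ℕ} (hN : 0 < N) (hpp : ∀ t, t < nn → 0 < pp t)
    (Nk m' llen slen : ℕ) (hNk : 2 ≤ Nk) (hdvd : Nk ∣ N)
    (hl : llen = m' * Nk) (hs : slen = Nk - 1)
    (hlt : llen < N * qq pp nn) :
    ∃ t, t < nn ∧ N * qq pp t ≤ llen ∧ llen + slen < N * qq pp (t+1) ∧
      Nk ∣ (llen - N * qq pp t) := by
  have hmono : ∀ t, N * qq pp t ≤ N * qq pp (t+1) := fun t =>
    Nat.mul_le_mul_left _ (qq_mono pp (by omega))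
  have h0 : N * qq pp 0 = 0 := by simp [qq]
  obtain ⟨t, ht, h1, h2⟩ := find_block (fun t => N * qq pp t) h0 hmono hlt
  obtain ⟨c, hc⟩ := hdvd
  have hdvd1 : Nk ∣ N * qq pp (t+1) := Dvd.dvd.mul_right ⟨c, hc⟩ _
  obtain ⟨c₁, hc₁⟩ := hdvd1
  have hm'c : m' < c₁ := by
    have : m' * Nk < c₁ * Nk := by rw [← hl, Nat.mul_comm c₁ Nk, ← hc₁]; exact h2
    exact Nat.lt_of_mul_lt_mul_right this
  have hstep : llen + Nk ≤ N * qq pp (t+1) := by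
    have h5 : (m' + 1) * Nk ≤ c₁ * Nk := Nat.mul_le_mul_right _ (by omega)
    rw [Nat.succ_mul] at h5
    rw [hc₁, Nat.mul_comm Nk c₁, hl]
    omega
  refine ⟨t, ht, h1, by omega, ?_⟩
  exact Nat.dvd_sub (hl ▸ Dvd.intro_left m' rfl) (Dvd.dvd.mul_right ⟨c, hc⟩ _)

theorem window_block {N nn : ℕ} {pp : ℕ → ℕ} (hN : 0 < N) (hpp : ∀ t, t < nn → 0 < pp t)
    (Nk m' : ℕ) (hNk : 2 ≤ Nk) (hdvd : Nk ∣ N)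
    (l s u : List ℕ) (hl : l.length = m' * Nk) (hs : s.length = Nk - 1)
    (hcond : (l ++ s ++ u).length = N * qq pp nn) :
    ∃ t, t < nn ∧ N * qq pp t ≤ l.length ∧ l.length + (Nk - 1) < N * qq pp (t+1) ∧
      (∃ m'', l.length - N * qq pp t = m'' * Nk) ∧
      (∀ s' : List ℕ, s'.length = Nk - 1 →
        blk N pp t (l ++ s' ++ u) = l.drop (N * qq pp t) ++ s' ++
          u.take (N * pp t - 1 - (l.length - N * qq pp t) - (Nk - 1))) ∧
      (∀ s' : List ℕ, s'.length = Nk - 1 → ∀ t', t' < nn → t' ≠ t →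
        blk N pp t' (l ++ s' ++ u) = blk N pp t' (l ++ s ++ u)) := by
  have hlen : l.length + s.length + u.length = N * qq pp nn := by
    simpa [List.length_append, Nat.add_assoc] using hcond
  have hlt : l.length < N * qq pp nn := by omega
  obtain ⟨t, ht, h1, h2, hdvdsub⟩ := block_decomp hN hpp Nk m' l.length (Nk - 1) hNk hdvd hl rfl hlt
  have hppos : 1 ≤ N * pp t := Nat.one_le_iff_ne_zero.mpr
    (Nat.mul_ne_zero (by omega) (by have := hpp t ht; omega))
  have hsucc : N * qq pp (t+1) = N * qq pp t + N * pp t := by rw [qq_succ, Nat.mul_add]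
  obtain ⟨m'', hm''⟩ := hdvdsub
  refine ⟨t, ht, h1, h2, ⟨m'', by rw [hm'', Nat.mul_comm]⟩, ?_, ?_⟩
  · intro s' hs'
    rw [blk, slice_mid l s' u _ _ h1 (by omega), hs']
  · intro s' hs' t' ht' hne
    rcases Nat.lt_or_ge t' t with hcase | hcase
    · have hup : N * qq pp t' + (N * pp t' - 1) ≤ l.length := by
        have e1 : N * qq pp (t'+1) = N * qq pp t' + N * pp t' := by rw [qq_succ, Nat.mul_add]
        have e2 : N * qq pp (t'+1) ≤ N * qq pp t :=
          Nat.mul_le_mul_left _ (qq_mono pp (by omega))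
        omega
      rw [blk, blk, List.append_assoc, List.append_assoc, slice_left _ _ _ _ hup,
        slice_left _ _ _ _ hup]
    · have hcase' : t + 1 ≤ t' := by omega
      have hge : (l ++ s').length ≤ N * qq pp t' := by
        have e2 : N * qq pp (t+1) ≤ N * qq pp t' := Nat.mul_le_mul_left _ (qq_mono pp hcase')
        rw [List.length_append, hs']
        omega
      have hge2 : (l ++ s).length ≤ N * qq pp t' := by
        rw [List.length_append, hs]
        rw [List.length_append, hs'] at hge
        exact hge
      rw [blk, blk, slice_right _ _ _ _ hge, slice_right _ _ _ _ hge2,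
        List.length_append, List.length_append, hs, hs']

theorem FF_vanish {K : Type} [Field K] {N nn : ℕ} {pp mm : ℕ → ℕ}
    {Φ : ℕ → (FA K →ₗ[K] K)}
    (hN : 0 < N) (hpp : ∀ t, t < nn → 0 < pp t)
    (k' : ℕ) (hk' : 1 ≤ k') (hdvd : 100 ^ (k' ^ 2) ∣ N)
    (hΦ : ∀ t (b : FA K), b ∈ Bk K k' → Φ t b = 0)
    (l : List ℕ) (m' : ℕ) (hl : l.length = m' * 100 ^ (k' ^ 2))
    (z : FA K) (hz : z ∈ Zset K k') (u : List ℕ) :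
    FF K N nn pp mm Φ (mon K l * z * mon K u) = 0 := by
  set Nk : ℕ := 100 ^ (k' ^ 2) with hNkdef
  have hNk2 : 2 ≤ Nk := Nat.one_lt_pow (by positivity) (by norm_num)
  rcases hz with ⟨κ, s, pz, qz, hpq, hqk, hslen, hgets, rfl⟩ |
    ⟨κ, s₁, s₂, pz, qz, e₁, e₂, hpq, hqk, he12, he2, hlen1, hlen2, hg1, hg2, hg3, hg4,
      hagree, rfl⟩
  · -- type (1)
    have hprod : mon K l * (κ • mon K s) * mon K u = κ • mon K (l ++ s ++ u) := by
      rw [mul_smul_comm, smul_mul_assoc, mon_mul, mon_mul]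
    rw [hprod, map_smul, smul_eq_mul]
    suffices h : FF K N nn pp mm Φ (mon K (l ++ s ++ u)) = 0 by rw [h, mul_zero]
    rw [FF_mon, ffn]
    by_cases hc : condW N nn pp mm (FreeMonoid.toList (FreeMonoid.ofList (l ++ s ++ u)))
    swap
    · rw [if_neg hc]
    rw [if_pos hc]
    have hc' : (l ++ s ++ u).length = N * qq pp nn := hc.1
    obtain ⟨t, ht, h1, h2, ⟨m'', hm''⟩, hblkt, _⟩ :=
      window_block hN hpp Nk m' hNk2 hdvd l s u hl hslen hc'
    apply Finset.prod_eq_zero (Finset.mem_range.mpr ht)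
    rw [show FreeMonoid.toList (FreeMonoid.ofList (l ++ s ++ u)) = l ++ s ++ u from rfl]
    rw [hblkt s hslen]
    apply hΦ
    apply Submodule.subset_span
    refine ⟨l.drop (N * qq pp t), (1:K) • mon K s,
      mon K (u.take (N * pp t - 1 - (l.length - N * qq pp t) - (Nk - 1))),
      ⟨m'', by rw [List.length_drop]; exact hm''⟩, ?_, ?_⟩
    · exact Or.inl ⟨1, s, pz, qz, hpq, hqk, hslen, hgets, rfl⟩
    · rw [one_smul, mon_mul, mon_mul]
  · -- type (2)
    have hprod : mon K l * (κ • (mon K s₁ + mon K s₂)) * mon K u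
        = κ • (mon K (l ++ s₁ ++ u) + mon K (l ++ s₂ ++ u)) := by
      rw [mul_smul_comm, smul_mul_assoc]
      congr 1
      rw [mul_add, add_mul, mon_mul, mon_mul, mon_mul, mon_mul]
    rw [hprod, map_smul, map_add, smul_eq_mul]
    suffices h : FF K N nn pp mm Φ (mon K (l ++ s₁ ++ u))
        + FF K N nn pp mm Φ (mon K (l ++ s₂ ++ u)) = 0 by rw [h, mul_zero]
    rw [FF_mon, FF_mon]
    have hdvdl : Nk ∣ l.length := ⟨m', by rw [hl, Nat.mul_comm]⟩
    have hb1 : 3 ^ pz * 100 ^ ((k' - 1) ^ 2) < Nk := pbound k' hk' (by omega)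
    have hb2 : 3 ^ qz * 100 ^ ((k' - 1) ^ 2) < Nk := pbound k' hk' hqk
    have hpos1 : 0 < 3 ^ pz * 100 ^ ((k' - 1) ^ 2) := by positivity
    have hpos2 : 0 < 3 ^ qz * 100 ^ ((k' - 1) ^ 2) := by positivity
    -- words agree away from the window
    have hEq : ∀ j : ℕ, Nk ∣ (j + 1) →
        (l ++ s₁ ++ u)[j]? = (l ++ s₂ ++ u)[j]? := by
      intro j hj
      rw [List.append_assoc, List.append_assoc]
      by_cases hjl : j < l.length
      · rw [List.getElem?_append_left hjl, List.getElem?_append_left hjl]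
      · push_neg at hjl
        rw [List.getElem?_append_right hjl, List.getElem?_append_right hjl]
        have hdvdi : Nk ∣ (j - l.length + 1) := by
          have h6 : j + 1 - l.length = j - l.length + 1 := by omega
          have := Nat.dvd_sub hj hdvdl
          rwa [h6] at this
        by_cases his : j - l.length < s₁.length
        · rw [List.getElem?_append_left his,
            List.getElem?_append_left (by omega : j - l.length < s₂.length)]
          apply hagree
          · intro hcontra
            rw [hcontra] at hdvdi
            exact absurd (Nat.le_of_dvd hpos1 hdvdi) (by omega)
          · intro hcontra
            rw [hcontra] at hdvdi
            exact absurd (Nat.le_of_dvd hpos2 hdvdi) (by omega)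
        · push_neg at his
          rw [List.getElem?_append_right his,
            List.getElem?_append_right (by omega : s₂.length ≤ j - l.length),
            hlen1, hlen2]
    have hL12 : (l ++ s₁ ++ u).length = (l ++ s₂ ++ u).length := by
      simp only [List.length_append, hlen1, hlen2]
    have hNdvd' : ∀ t', t' < nn → Nk ∣ (N * qq pp (t'+1) - 1 + 1) := by
      intro t' ht'
      have hq1 : 1 ≤ qq pp (t'+1) := by
        have := hpp t' ht'
        have : pp t' ≤ qq pp (t'+1) := by
          rw [qq_succ]; omega
        omega
      have : 1 ≤ N * qq pp (t'+1) := Nat.one_le_iff_ne_zero.mpr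
        (Nat.mul_ne_zero (by omega) (by omega))
      rw [Nat.sub_add_cancel this]
      exact Dvd.dvd.mul_right hdvd _
    have hcondiff : condW N nn pp mm (l ++ s₁ ++ u) ↔ condW N nn pp mm (l ++ s₂ ++ u) := by
      constructor
      · rintro ⟨hL, hg⟩
        exact ⟨by omega, fun t' ht' => by
          rw [← hEq _ (hNdvd' t' ht')]; exact hg t' ht'⟩
      · rintro ⟨hL, hg⟩
        exact ⟨by omega, fun t' ht' => by
          rw [hEq _ (hNdvd' t' ht')]; exact hg t' ht'⟩
    rw [ffn, ffn]
    by_cases hc : condW N nn pp mm (FreeMonoid.toList (FreeMonoid.ofList (l ++ s₁ ++ u)))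
    swap
    · have hc₂ : ¬ condW N nn pp mm (FreeMonoid.toList (FreeMonoid.ofList (l ++ s₂ ++ u))) :=
        fun h => hc (hcondiff.mpr h)
      rw [if_neg hc, if_neg hc₂, add_zero]
    · have hc₂ : condW N nn pp mm (FreeMonoid.toList (FreeMonoid.ofList (l ++ s₂ ++ u))) :=
        hcondiff.mp hc
      rw [if_pos hc, if_pos hc₂]
      rw [show FreeMonoid.toList (FreeMonoid.ofList (l ++ s₁ ++ u)) = l ++ s₁ ++ u from rfl,
        show FreeMonoid.toList (FreeMonoid.ofList (l ++ s₂ ++ u)) = l ++ s₂ ++ u from rfl]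
      have hc' : (l ++ s₁ ++ u).length = N * qq pp nn := hc.1
      obtain ⟨t, ht, h1, h2, ⟨m'', hm''⟩, hblkt, hblkother⟩ :=
        window_block hN hpp Nk m' hNk2 hdvd l s₁ u hl hlen1 hc'
      rw [← Finset.mul_prod_erase _ _ (Finset.mem_range.mpr ht),
        ← Finset.mul_prod_erase _ _ (Finset.mem_range.mpr ht)]
      have hrest : ∏ t' ∈ (Finset.range nn).erase t, Φ t' (mon K (blk N pp t' (l ++ s₂ ++ u)))
          = ∏ t' ∈ (Finset.range nn).erase t, Φ t' (mon K (blk N pp t' (l ++ s₁ ++ u))) := by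
        refine Finset.prod_congr rfl fun t' ht' => ?_
        obtain ⟨hne, hmem⟩ := Finset.mem_erase.mp ht'
        rw [hblkother s₂ hlen2 t' (Finset.mem_range.mp hmem) hne]
      rw [hrest, ← add_mul]
      have hfactor : Φ t (mon K (blk N pp t (l ++ s₁ ++ u)))
          + Φ t (mon K (blk N pp t (l ++ s₂ ++ u))) = 0 := by
        rw [hblkt s₁ hlen1, hblkt s₂ hlen2, ← map_add]
        apply hΦ
        apply Submodule.subset_span
        refine ⟨l.drop (N * qq pp t), (1:K) • (mon K s₁ + mon K s₂),
          mon K (u.take (N * pp t - 1 - (l.length - N * qq pp t) - (Nk - 1))),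
          ⟨m'', by rw [List.length_drop]; exact hm''⟩, ?_, ?_⟩
        · exact Or.inr ⟨1, s₁, s₂, pz, qz, e₁, e₂, hpq, hqk, he12, he2, hlen1, hlen2,
            hg1, hg2, hg3, hg4, hagree, rfl⟩
        · rw [one_smul, mul_add, add_mul, mon_mul, mon_mul, mon_mul, mon_mul]
      rw [hfactor, zero_mul]

theorem sum_sub_le {R M ι : Type*} [Semiring R] [AddCommMonoid M] [Module R M]
    (s : Finset ι) (f : ι → Submodule R M) (U : Submodule R M)
    (h : ∀ i ∈ s, f i ≤ U) : ∑ i ∈ s, f i ≤ U := by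
  classical
  induction s using Finset.induction_on with
  | empty => simp
  | @insert i s' hni ih =>
    rw [Finset.sum_insert hni, Submodule.add_eq_sup]
    exact sup_le (h i (Finset.mem_insert_self i s'))
      (ih fun j hj => h j (Finset.mem_insert_of_mem hj))

theorem Bk_le_Bsum {K : Type} [Field K] {k' k : ℕ} (h : k' ∈ Finset.Icc 1 k) :
    Bk K k' ≤ Bsum K k := by
  rw [Bsum, ← Finset.add_sum_erase _ _ h, Submodule.add_eq_sup]
  exact le_sup_left

theorem Bsum_le_ker {K : Type} [Field K] {N nn : ℕ} {pp mm : ℕ → ℕ}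
    {Φ : ℕ → (FA K →ₗ[K] K)}
    (hN : 0 < N) (hpp : ∀ t, t < nn → 0 < pp t) (k : ℕ)
    (hdvds : ∀ k', k' ∈ Finset.Icc 1 k → 100 ^ (k' ^ 2) ∣ N)
    (hΦ : ∀ t (b : FA K), b ∈ Bsum K k → Φ t b = 0) :
    Bsum K k ≤ LinearMap.ker (FF K N nn pp mm Φ) := by
  refine sum_sub_le _ _ _ fun k' hk' => ?_
  rw [Bk, Submodule.span_le]
  rintro x ⟨l, z, v, ⟨m', hm'⟩, hzz, rfl⟩
  simp only [SetLike.mem_coe, LinearMap.mem_ker]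
  have hk'1 : 1 ≤ k' := (Finset.mem_Icc.mp hk').1
  have hΦ' : ∀ t (b : FA K), b ∈ Bk K k' → Φ t b = 0 := fun t b hb =>
    hΦ t b (Bk_le_Bsum hk' hb)
  induction v using MonoidAlgebra.induction_linear with
  | zero => rw [mul_zero, map_zero]
  | add f g hf hg => rw [mul_add, map_add, hf, hg, add_zero]
  | single w c =>
    have hsingle : (MonoidAlgebra.single w c : FA K) = c • mon K (FreeMonoid.toList w) := by
      rw [mon, FreeMonoid.ofList_toList,
        MonoidAlgebra.smul_single', mul_one]
    rw [hsingle, mul_smul_comm, map_smul,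
      FF_vanish hN hpp k' hk'1 (hdvds k' hk') hΦ' l m' hm' z hzz (FreeMonoid.toList w),
      smul_zero]

theorem Agr_support {K : Type} [Field K] {d : ℕ} {a : FA K} (ha : a ∈ Agr K d) :
    ∀ w ∈ a.coeff.support, (FreeMonoid.toList w).length = d := by
  have hle : Agr K d ≤ MonoidAlgebra.supported K K {w : FreeMonoid ℕ | (FreeMonoid.toList w).length = d} := by
    rw [Agr, Submodule.span_le]
    rintro x ⟨lst, hlst, rfl⟩
    rw [SetLike.mem_coe, MonoidAlgebra.mem_supported]
    intro w hw
    have hw2 : w ∈ (Finsupp.single (FreeMonoid.ofList lst) (1:K)).support := hw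
    have hw' : w = FreeMonoid.ofList lst :=
      Finset.mem_singleton.mp (Finsupp.support_single_subset hw2)
    subst hw'
    exact hlst
  exact fun w hw => MonoidAlgebra.mem_supported.mp (hle ha) hw


/-- Lemma 5: if each `aᵢ ∈ A(100^{k²}·pᵢ − 1)` and `aᵢ ∉ B_1 + ⋯ + B_k`, then for all
`m_1, …, m_n` the product `a_1 x_{m_1} a_2 x_{m_2} ⋯ a_n x_{m_n}` is not in `B_1 + ⋯ + B_k`. -/
theorem product_not_in_Bsum (K : Type) [Field K] (k : ℕ) (hk : 1 ≤ k)
    (n : ℕ) (hn : 1 ≤ n) (a : Fin n → FA K) (p : Fin n → ℕ) (hp : ∀ i, 0 < p i)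
    (ha : ∀ i, a i ∈ Agr K (100 ^ (k ^ 2) * p i - 1))
    (hB : ∀ i, a i ∉ Bsum K k) (m : Fin n → ℕ) :
    (List.ofFn fun i => a i * xg K (m i)).prod ∉ Bsum K k := by
  intro hmem
  have hN : 0 < 100 ^ (k ^ 2) := by positivity
  set N : ℕ := 100 ^ (k ^ 2) with hNdef
  set pp : ℕ → ℕ := fun t => if h : t < n then p ⟨t, h⟩ else 1 with hppdef
  set mm : ℕ → ℕ := fun t => if h : t < n then m ⟨t, h⟩ else 0 with hmmdef
  have hφex : ∀ i : Fin n, ∃ φ : FA K →ₗ[K] K, φ (a i) = 1 ∧ ∀ b ∈ Bsum K k, φ b = 0 :=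
    fun i => exists_functional (Bsum K k) (hB i)
  choose φ hφ1 hφ2 using hφex
  set Φ : ℕ → (FA K →ₗ[K] K) := fun t => if h : t < n then φ ⟨t, h⟩ else 0 with hΦdef
  have hpp : ∀ t, t < n → 0 < pp t := by
    intro t ht
    rw [hppdef]
    simp only [dif_pos ht]
    exact hp _
  have hΦB : ∀ t (b : FA K), b ∈ Bsum K k → Φ t b = 0 := by
    intro t b hb
    simp only [hΦdef]
    split_ifs with h
    · exact hφ2 _ b hb
    · simp
  have hdvds : ∀ k', k' ∈ Finset.Icc 1 k → 100 ^ (k' ^ 2) ∣ N := by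
    intro k' hk'
    rw [hNdef]
    exact pow_dvd_pow 100 (Nat.pow_le_pow_left (Finset.mem_Icc.mp hk').2 2)
  have hzero : FF K N n pp mm Φ ((List.ofFn fun i => a i * xg K (m i)).prod) = 0 :=
    LinearMap.mem_ker.mp (Bsum_le_ker hN hpp k hdvds hΦB hmem)
  have hprodsame : (fun i : Fin n => a i * xg K (m i))
      = fun i : Fin n => a i * mon K [mm i.val] := by
    funext i
    have h1 : mm i.val = m i := by rw [hmmdef]; simp [i.isLt]
    rw [h1]
    rfl
  have hsupp : ∀ i : Fin n, ∀ w ∈ (a i).coeff.support,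
      (FreeMonoid.toList w).length = N * pp i.val - 1 := by
    intro i w hw
    have h1 : pp i.val = p i := by rw [hppdef]; simp [i.isLt]
    rw [h1]
    exact Agr_support (ha i) w hw
  have heval := FF_prod (Φ := Φ) (mm := mm) hN hpp a hsupp
  rw [hprodsame, heval] at hzero
  have hone : ∀ i : Fin n, Φ i.val (a i) = 1 := by
    intro i
    rw [hΦdef]
    simp only [dif_pos i.isLt, Fin.eta]
    exact hφ1 i
  rw [Finset.prod_congr rfl (fun i _ => hone i), Finset.prod_const_one] at hzero
  exact one_ne_zero hzero
end JoinFacts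
end
end

section
/- Let m ≥ 0 and let (x_0X)^m = a_mX^m + a_{m−1}X^{m−1} + … + a_0 in A[X;D]. If a monomial s = x_{n_1}x_{n_2}⋯x_{n_m} appears with nonzero coefficient in the basis expansion of a_t for some t ≥ 0, then t = m − deg(s) and, for every i = 1, …, m, the partial sum n_1 + n_2 + … + n_i is at most i − 1. -/
noncomputable section

namespace Lemma6Aux

/-- Increment the letter at (0-based) position `p`. -/
def incr : ℕ → List ℕ → List ℕ
  | _, [] => []
  | 0, a :: l => (a + 1) :: l
  | p + 1, a :: l => a :: incr p l

def Slt (l : List ℕ) : Prop := ∀ i, 1 ≤ i → i ≤ l.length → (l.take i).sum < i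
def Sle (l : List ℕ) : Prop := ∀ i, 1 ≤ i → i ≤ l.length → (l.take i).sum ≤ i

lemma incr_length : ∀ (p : ℕ) (l : List ℕ), (incr p l).length = l.length
  | p, [] => by cases p <;> rfl
  | 0, _ :: _ => rfl
  | p + 1, a :: l => by simp [incr, incr_length p l]

lemma incr_sum : ∀ (p : ℕ) (l : List ℕ), p < l.length → (incr p l).sum = l.sum + 1
  | _, [], h => absurd h (by simp)
  | 0, a :: l, _ => by simp [incr]; omega
  | p + 1, a :: l, h => by
      simp only [incr, List.sum_cons, incr_sum p l (by simpa using h)]; omega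

lemma take_incr_of_le : ∀ (i p : ℕ) (l : List ℕ), i ≤ p → (incr p l).take i = l.take i
  | 0, _, _, _ => by simp
  | i + 1, 0, l, h => absurd h (by omega)
  | i + 1, p + 1, [], _ => rfl
  | i + 1, p + 1, a :: l, h => by
      simp [incr, take_incr_of_le i p l (by omega)]

lemma sum_take_incr : ∀ (p i : ℕ) (l : List ℕ), p < l.length → p < i →
    ((incr p l).take i).sum = (l.take i).sum + 1
  | _, _, [], h, _ => absurd h (by simp)
  | 0, i, a :: l, _, hi => by
      obtain ⟨j, rfl⟩ : ∃ j, i = j + 1 := ⟨i - 1, by omega⟩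
      simp [incr]; omega
  | p + 1, i, a :: l, h, hi => by
      obtain ⟨j, rfl⟩ : ∃ j, i = j + 1 := ⟨i - 1, by omega⟩
      simp only [incr, List.take_succ_cons, List.sum_cons,
        sum_take_incr p j l (by simpa using h) (by omega)]
      omega

lemma Sle_incr {l : List ℕ} {p : ℕ} (hS : Slt l) (hp : p < l.length) : Sle (incr p l) := by
  intro i h1 h2
  rw [incr_length] at h2
  rcases le_or_gt i p with h | h
  · rw [take_incr_of_le i p l h]; exact (hS i h1 h2).le
  · rw [sum_take_incr p i l hp h]; exact hS i h1 h2

lemma Slt_cons_zero {l : List ℕ} (hS : Sle l) : Slt (0 :: l) := by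
  intro i h1 h2
  obtain ⟨j, rfl⟩ : ∃ j, i = j + 1 := ⟨i - 1, by omega⟩
  simp only [List.take_succ_cons, List.sum_cons, List.length_cons] at *
  rcases Nat.eq_zero_or_pos j with rfl | hj
  · simp
  · have := hS j hj (by omega); omega

def GoodS (m t : ℕ) : Set (FreeMonoid ℕ) :=
  {w | w.toList.length = m ∧ t + w.toList.sum = m ∧ Slt w.toList}

def MidS (m j : ℕ) : Set (FreeMonoid ℕ) :=
  {w | w.toList.length = m ∧ j + w.toList.sum = m ∧ Sle w.toList}

variable (K : Type) [Field K]

lemma D_one (D : FA K →ₗ[K] FA K) (hD : IsDer K D) : D 1 = 0 := by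
  have h : D 1 = D 1 + D 1 := by simpa using hD.1 1 1
  exact (left_eq_add.mp h)

lemma mon_cons (a : ℕ) (l : List ℕ) : mon K (a :: l) = xg K a * mon K l := by
  simp [mon, xg, MonoidAlgebra.single_mul_single, ← FreeMonoid.ofList_append]

lemma D_mon (D : FA K →ₗ[K] FA K) (hD : IsDer K D) :
    ∀ l : List ℕ, D (mon K l) = ∑ p ∈ Finset.range l.length, mon K (incr p l)
  | [] => by
      have : mon K [] = (1 : FA K) := by
        simp [mon, MonoidAlgebra.one_def]
      rw [this, D_one K D hD]; simp
  | a :: l => by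
      rw [mon_cons, hD.1, hD.2 a, D_mon D hD l, Finset.mul_sum]
      simp only [← mon_cons]
      rw [List.length_cons, Finset.sum_range_succ']
      simp only [incr]
      rw [add_comm]

lemma supported_closed {S S' : Set (FreeMonoid ℕ)} (T : FA K →ₗ[K] FA K)
    (hT : ∀ w ∈ S, T (MonoidAlgebra.single w (1:K)) ∈ MonoidAlgebra.supported K K S')
    {a : FA K} (ha : a ∈ MonoidAlgebra.supported K K S) :
    T a ∈ MonoidAlgebra.supported K K S' := by
  rw [MonoidAlgebra.supported_eq_span_single] at ha
  have h2 : T a ∈ Submodule.map T (Submodule.span K ((fun i => MonoidAlgebra.single i (1:K)) '' S)) :=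
    Submodule.mem_map_of_mem ha
  rw [Submodule.map_span] at h2
  refine Submodule.span_le.mpr ?_ h2
  rintro _ ⟨_, ⟨w, hw, rfl⟩, rfl⟩
  exact hT w hw

lemma D_supported {S S' : Set (FreeMonoid ℕ)} (D : FA K →ₗ[K] FA K) (hD : IsDer K D)
    (h : ∀ w ∈ S, ∀ p, p < (FreeMonoid.toList w).length →
      FreeMonoid.ofList (incr p (FreeMonoid.toList w)) ∈ S')
    {a : FA K} (ha : a ∈ MonoidAlgebra.supported K K S) : D a ∈ MonoidAlgebra.supported K K S' := by
  refine supported_closed K D ?_ ha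
  intro w hw
  have hw1 : MonoidAlgebra.single w (1:K) = mon K (FreeMonoid.toList w) := by
    simp [mon]
  rw [hw1, D_mon K D hD]
  exact Submodule.sum_mem _ (fun p hp =>
    MonoidAlgebra.mem_supported.2 (Finsupp.single_mem_supported K 1 (h w hw p (Finset.mem_range.mp hp))))

lemma mulLeft_supported {S S' : Set (FreeMonoid ℕ)}
    (h : ∀ w ∈ S, FreeMonoid.of 0 * w ∈ S')
    {a : FA K} (ha : a ∈ MonoidAlgebra.supported K K S) :
    xg K 0 * a ∈ MonoidAlgebra.supported K K S' := by
  have he : xg K 0 * a = LinearMap.mulLeft K (xg K 0) a := rfl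
  rw [he]
  refine supported_closed K _ ?_ ha
  intro w hw
  have : LinearMap.mulLeft K (xg K 0) (MonoidAlgebra.single w (1:K)) =
      MonoidAlgebra.single (FreeMonoid.of 0 * w) (1:K) := by
    rw [LinearMap.mulLeft_apply]
    simp [xg, mon, MonoidAlgebra.single_mul_single, FreeMonoid.ofList_singleton]
  rw [this]
  exact MonoidAlgebra.mem_supported.2 (Finsupp.single_mem_supported K 1 (h w hw))

lemma acoef_mem (D : FA K →ₗ[K] FA K) (hD : IsDer K D) :
    ∀ m t, acoef K D m t ∈ MonoidAlgebra.supported K K (GoodS m t) := by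
  intro m
  induction m with
  | zero =>
    intro t
    match t with
    | 0 =>
      show (1 : FA K) ∈ _
      rw [MonoidAlgebra.one_def]
      refine MonoidAlgebra.mem_supported.2 (Finsupp.single_mem_supported K 1 ?_)
      refine ⟨rfl, rfl, ?_⟩
      intro i h1 h2
      simp only [FreeMonoid.toList_one, List.length_nil] at h2
      omega
    | t + 1 => exact Submodule.zero_mem _
  | succ m IH =>
    intro t
    match t with
    | 0 =>
      have hz : D (acoef K D m 0) ∈ MonoidAlgebra.supported K K (∅ : Set (FreeMonoid ℕ)) := by
        refine D_supported K D hD ?_ (IH 0)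
        rintro w ⟨hlen, hsum, hslt⟩ p hp
        exfalso
        have hm : 1 ≤ m := by omega
        have h2 := hslt m hm (le_of_eq hlen.symm)
        rw [show (FreeMonoid.toList w).take m = FreeMonoid.toList w from by
          rw [← hlen]; exact List.take_length] at h2
        omega
      replace hz : D (acoef K D m 0) = 0 :=
        MonoidAlgebra.coeff_injective (by simpa [MonoidAlgebra.mem_supported] using hz)
      show xg K 0 * D (acoef K D m 0) ∈ _
      rw [hz, mul_zero]
      exact Submodule.zero_mem _
    | j + 1 =>
      have h1 : acoef K D m j ∈ MonoidAlgebra.supported K K (MidS m j) := by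
        refine MonoidAlgebra.supported_mono ?_ (IH j)
        rintro w ⟨hlen, hsum, hslt⟩
        exact ⟨hlen, hsum, fun i a b => (hslt i a b).le⟩
      have h2 : D (acoef K D m (j + 1)) ∈ MonoidAlgebra.supported K K (MidS m j) := by
        refine D_supported K D hD ?_ (IH (j + 1))
        rintro w ⟨hlen, hsum, hslt⟩ p hp
        refine ⟨?_, ?_, ?_⟩
        · simp [incr_length, hlen]
        · simp only [FreeMonoid.toList_ofList, incr_sum p _ hp]; omega
        · simpa [Set.mem_setOf_eq, FreeMonoid.toList_ofList] using Sle_incr hslt hp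
      have h3 := Submodule.add_mem _ h1 h2
      show xg K 0 * (acoef K D m j + D (acoef K D m (j + 1))) ∈ _
      refine mulLeft_supported K ?_ h3
      rintro w ⟨hlen, hsum, hsle⟩
      have ht : (FreeMonoid.of 0 * w).toList = 0 :: FreeMonoid.toList w := by
        simp [FreeMonoid.toList_mul]
      refine ⟨?_, ?_, ?_⟩
      · simp [ht, hlen]
      · simp only [ht, List.sum_cons]; omega
      · show Slt (FreeMonoid.toList (FreeMonoid.of 0 * w))
        rw [ht]; exact Slt_cons_zero hsle

end Lemma6Aux


/-- Lemma 6: if the monomial `s = x_{n₁} ⋯ x_{n_m}` (given by the list `l = [n₁, …, n_m]`)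
appears with a nonzero coefficient in the coefficient `a_t` of `(x_0X)^m = Σ_j a_j X^j`,
then `t = m − deg(s)` and `n₁ + ⋯ + nᵢ ≤ i − 1` for every `i = 1, …, m`. -/
theorem coeff_of_x0X_pow (K : Type) [Field K] (D : FA K →ₗ[K] FA K) (hD : IsDer K D)
    (m t : ℕ) (l : List ℕ) (hl : l.length = m)
    (h : (acoef K D m t).coeff (FreeMonoid.ofList l) ≠ 0) :
    t + l.sum = m ∧ ∀ i, 1 ≤ i → i ≤ m → (l.take i).sum < i := by
  have hmem := Lemma6Aux.acoef_mem K D hD m t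
  rw [MonoidAlgebra.mem_supported'] at hmem
  have hin : FreeMonoid.ofList l ∈ Lemma6Aux.GoodS m t := by
    by_contra hc
    exact h (hmem _ hc)
  obtain ⟨hlen, hsum, hslt⟩ := hin
  simp only [FreeMonoid.toList_ofList] at hsum hslt
  refine ⟨hsum, fun i h1 h2 => hslt i h1 (by omega)⟩
end
end

section
/- Let k ≥ 1 and let a ∈ A(100^{k²} − 1) with a ∈ B_1 + … + B_k. Set ξ_i = c_i − c_{i−1} − 1 for i = 1, …, k+2, and let E = A(ξ_1)x_{c_0}A(ξ_2)x_{c_1}A(ξ_3)x_{c_2}⋯x_{c_k}A(ξ_{k+2}). Let b̄ be the sum of all basis summands of a (monomials with their coefficients in the monomial-basis expansion of a) that belong to E. Suppose moreover that for every non-identity permutation σ of the set {c_0, c_1, …, c_k}, the element a has no basis summands belonging to E^σ = A(ξ_1)x_{σ(c_0)}A(ξ_2)x_{σ(c_1)}A(ξ_3)x_{σ(c_2)}⋯x_{σ(c_k)}A(ξ_{k+2}). Then b̄ ∈ B_1 + … + B_{k−1}. -/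
noncomputable section

/-- The numbers `c_0 = 0`, `c_i = 3^{i-1}·100^{(k-1)²}` for `1 ≤ i ≤ k+1`, and
`c_{k+2} = 100^{k²}`. -/
def cseq (k : ℕ) : ℕ → ℕ
  | 0 => 0
  | i + 1 => if i + 1 = k + 2 then 100 ^ (k ^ 2) else 3 ^ i * 100 ^ ((k - 1) ^ 2)

/-- A monomial (given by its list `l` of letter-indices) lies in
`E^σ = A(ξ_1) x_{σ(c_0)} A(ξ_2) x_{σ(c_1)} ⋯ x_{σ(c_k)} A(ξ_{k+2})`, where
`ξ_i = c_i − c_{i-1} − 1`, iff it has length `100^{k²} − 1` and its letter in the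
(1-indexed) position `c_{i+1}` is `x_{c_{σ(i)}}` for every `i = 0, …, k`. -/
def EmonP (k : ℕ) (σ : Equiv.Perm (Fin (k + 1))) (l : List ℕ) : Prop :=
  l.length = 100 ^ (k ^ 2) - 1 ∧
  ∀ i : Fin (k + 1), l[cseq k ((i : ℕ) + 1) - 1]? = some (cseq k ((σ i : ℕ)))

open scoped Classical in
/-- The sum of all basis summands of `a` whose monomial satisfies `P`. -/
def summandsIn (K : Type) [Field K] (P : List ℕ → Prop) (a : FA K) : FA K :=
  MonoidAlgebra.ofCoeff (Finsupp.filter (fun s => P (FreeMonoid.toList s)) a.coeff)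

namespace L8


/-- the special positions -/
def spos (k r : ℕ) : ℕ := 3 ^ r * 100 ^ ((k - 1) ^ 2)

lemma spos_pos (k r : ℕ) : 0 < spos k r :=
  Nat.mul_pos (Nat.pow_pos (by norm_num)) (Nat.pow_pos (by norm_num))

lemma spos_inj {k r r' : ℕ} (h : spos k r = spos k r') : r = r' := by
  have h2 : (3:ℕ) ^ r = 3 ^ r' :=
    Nat.eq_of_mul_eq_mul_right (by positivity) h
  exact Nat.pow_right_injective (by norm_num) h2

lemma cseq_succ {k r : ℕ} (h : r ≤ k) : cseq k (r + 1) = spos k r := by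
  show (if r + 1 = k + 2 then _ else _) = _
  rw [if_neg (by omega)]
  rfl

lemma cseq_pos {k r : ℕ} (h : r ≤ k) : 0 < cseq k (r + 1) := by
  rw [cseq_succ h]; exact spos_pos k r

lemma cseq_inj {k r r' : ℕ} (hr : r ≤ k) (hr' : r' ≤ k)
    (h : cseq k r = cseq k r') : r = r' := by
  match r, r' with
  | 0, 0 => rfl
  | 0, s + 1 =>
    rw [cseq_succ (by omega)] at h
    exfalso
    have h0 : cseq k 0 = 0 := rfl
    have := spos_pos k s; omega
  | s + 1, 0 =>
    rw [cseq_succ (by omega)] at h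
    exfalso
    have h0 : cseq k 0 = 0 := rfl
    have := spos_pos k s; omega
  | s + 1, t + 1 =>
    rw [cseq_succ (by omega), cseq_succ (by omega)] at h
    exact congrArg Nat.succ (spos_inj h)

lemma key_arith {i k m s r : ℕ} (hi1 : 1 ≤ i) (hik : i + 1 ≤ k) (hs : s ≤ i) :
    m * 100 ^ (i ^ 2) + spos i s ≠ spos k r := by
  obtain ⟨j, rfl⟩ : ∃ j, i = j + 1 := ⟨i - 1, by omega⟩
  have hA1 : 0 < spos (j+1) s := spos_pos _ _
  have hA2 : spos (j+1) s < 100 ^ ((j+1) ^ 2) := by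
    have h1 : (3:ℕ) ^ s ≤ 3 ^ (j+1) := Nat.pow_le_pow_right (by norm_num) hs
    have h2 : (3:ℕ) ^ (j+1) < 100 ^ (j+1) := by
      apply Nat.pow_lt_pow_left (by norm_num) (by omega)
    have h3 : spos (j+1) s < 100 ^ (j+1) * 100 ^ (j ^ 2) := by
      unfold spos
      simp only [Nat.add_sub_cancel]
      calc 3 ^ s * 100 ^ (j ^ 2) ≤ 3 ^ (j+1) * 100 ^ (j ^ 2) :=
            Nat.mul_le_mul_right _ h1
        _ < 100 ^ (j+1) * 100 ^ (j ^ 2) := by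
            exact (Nat.mul_lt_mul_right (Nat.pow_pos (by norm_num))).mpr h2
    calc spos (j+1) s < 100 ^ (j+1) * 100 ^ (j ^ 2) := h3
      _ = 100 ^ (j + 1 + j ^ 2) := by rw [← pow_add]
      _ ≤ 100 ^ ((j+1) ^ 2) := Nat.pow_le_pow_right (by norm_num) (by ring_nf; omega)
  have hdvd : 100 ^ ((j+1) ^ 2) ∣ spos k r := by
    apply Dvd.dvd.mul_left
    exact pow_dvd_pow 100 (Nat.pow_le_pow_left (by omega) 2)
  intro h
  have h1 : (m * 100 ^ ((j+1) ^ 2) + spos (j+1) s) % 100 ^ ((j+1) ^ 2) = spos (j+1) s := by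
    rw [Nat.mul_comm, Nat.mul_add_mod]
    exact Nat.mod_eq_of_lt hA2
  have h2 : spos k r % 100 ^ ((j+1) ^ 2) = 0 := Nat.mod_eq_zero_of_dvd hdvd
  rw [h] at h1
  omega

/-- global special position predicate: `j` (0-indexed) is a checked position. -/
def tpos (k j : ℕ) : Prop := ∃ r, r ≤ k ∧ j + 1 = spos k r

open scoped Classical in
/-- value to write at a special position -/
def gval (k j : ℕ) : ℕ := if h : tpos k j then cseq k h.choose else 0

lemma gval_eq {k j r : ℕ} (hr : r ≤ k) (hj : j + 1 = spos k r) : gval k j = cseq k r := by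
  have h : tpos k j := ⟨r, hr, hj⟩
  rw [gval, dif_pos h]
  obtain ⟨_, h2⟩ := h.choose_spec
  congr 1
  exact spos_inj (h2.symm.trans hj)

open scoped Classical in
/-- overwrite all special positions (with global offset `d`) by the canonical letters -/
def modifyD (k : ℕ) : ℕ → List ℕ → List ℕ
  | _, [] => []
  | d, a :: t => (if tpos k d then gval k d else a) :: modifyD k (d + 1) t

@[simp] lemma length_modifyD (k : ℕ) : ∀ (d : ℕ) (l : List ℕ),
    (modifyD k d l).length = l.length
  | _, [] => rfl
  | d, _ :: t => congrArg Nat.succ (length_modifyD k (d+1) t)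

lemma modifyD_append (k : ℕ) : ∀ (A : List ℕ) (d : ℕ) (B : List ℕ),
    modifyD k d (A ++ B) = modifyD k d A ++ modifyD k (d + A.length) B
  | [], d, B => by simp [modifyD]
  | a :: t, d, B => by
    simp only [List.cons_append, modifyD, List.length_cons]
    rw [modifyD_append k t (d+1) B]
    have : d + 1 + t.length = d + (t.length + 1) := by omega
    rw [this]

open scoped Classical in
lemma getElem?_modifyD (k : ℕ) : ∀ (l : List ℕ) (d j : ℕ),
    (modifyD k d l)[j]? = (l[j]?).map (fun a => if tpos k (d + j) then gval k (d + j) else a)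
  | [], d, j => by simp [modifyD]
  | a :: t, d, 0 => by simp [modifyD]
  | a :: t, d, j + 1 => by
    simp only [modifyD, List.getElem?_cons_succ]
    rw [getElem?_modifyD k t (d+1) j]
    have : d + 1 + j = d + (j + 1) := by omega
    rw [this]



variable (K : Type) [Field K]

open scoped Classical in
/-- filtering by a predicate on words, as a linear map -/
def Pfil (P : List ℕ → Prop) : FA K →ₗ[K] FA K where
  toFun a := MonoidAlgebra.ofCoeff (Finsupp.filter (fun s => P (FreeMonoid.toList s)) a.coeff)
  map_add' _ _ := congrArg MonoidAlgebra.ofCoeff Finsupp.filter_add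
  map_smul' _ _ := congrArg MonoidAlgebra.ofCoeff Finsupp.filter_smul

open scoped Classical in
lemma Pfil_apply (P : List ℕ → Prop) (a : FA K) (s : FreeMonoid ℕ) :
    (Pfil K P a).coeff s = if P (FreeMonoid.toList s) then a.coeff s else 0 := rfl

/-- overwriting the special letters, as a map of words -/
def fmod (k : ℕ) : FreeMonoid ℕ → FreeMonoid ℕ :=
  fun w => FreeMonoid.ofList (modifyD k 0 (FreeMonoid.toList w))

/-- overwriting the special letters, as a linear map -/
def Phi (k : ℕ) : FA K →ₗ[K] FA K := MonoidAlgebra.mapDomainLinearMap K K (fmod k)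

lemma mon_mul_mon (A B : List ℕ) : mon K A * mon K B = mon K (A ++ B) := by
  simp [mon, MonoidAlgebra.single_mul_single, FreeMonoid.ofList_append]

lemma mon_mul_single (A : List ℕ) (w : FreeMonoid ℕ) (c : K) :
    mon K A * MonoidAlgebra.single w c
      = MonoidAlgebra.single (FreeMonoid.ofList A * w) c := by
  simp [mon, MonoidAlgebra.single_mul_single]

lemma mul_eq_mapDomain (L : List ℕ) (v : FA K) :
    mon K L * v = MonoidAlgebra.ofCoeff (Finsupp.mapDomain (fun w => FreeMonoid.ofList L * w) v.coeff) := by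
  induction v using MonoidAlgebra.induction_linear with
  | zero => simp
  | add f g hf hg => rw [mul_add, hf, hg, MonoidAlgebra.coeff_add, Finsupp.mapDomain_add,
      MonoidAlgebra.ofCoeff_add]
  | single g b => rw [MonoidAlgebra.coeff_single, Finsupp.mapDomain_single, mon_mul_single]; rfl

open scoped Classical in
lemma filter_mapDomain {α β : Type} (p : β → Prop) (f : α → β) (v : α →₀ K) :
    Finsupp.filter p (Finsupp.mapDomain f v)
      = Finsupp.mapDomain f (Finsupp.filter (fun w => p (f w)) v) := by
  induction v using Finsupp.induction_linear with
  | zero => rw [Finsupp.mapDomain_zero, Finsupp.filter_zero, Finsupp.filter_zero,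
      Finsupp.mapDomain_zero]
  | add a b ha hb =>
      rw [Finsupp.mapDomain_add, Finsupp.filter_add, ha, hb, Finsupp.filter_add,
        Finsupp.mapDomain_add]
  | single g b =>
      rw [Finsupp.mapDomain_single]
      by_cases h : p (f g)
      · rw [Finsupp.filter_single_of_pos _ h,
          Finsupp.filter_single_of_pos (p := fun w => p (f w)) h,
          Finsupp.mapDomain_single]
      · rw [Finsupp.filter_single_of_neg _ h,
          Finsupp.filter_single_of_neg (p := fun w => p (f w)) h,
          Finsupp.mapDomain_zero]

open scoped Classical in
lemma Pfil_mul_left (P : List ℕ → Prop) (L : List ℕ) (v : FA K) :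
    Pfil K P (mon K L * v)
      = mon K L * Pfil K (fun w => P (L ++ w)) v := by
  rw [mul_eq_mapDomain, mul_eq_mapDomain]
  exact congrArg MonoidAlgebra.ofCoeff (filter_mapDomain K _ _ v.coeff)


lemma spos_def (k r : ℕ) : spos k r = 3 ^ r * 100 ^ ((k - 1) ^ 2) := rfl

lemma Phi_apply (k : ℕ) (v : FA K) :
    Phi K k v = MonoidAlgebra.ofCoeff (Finsupp.mapDomain (fmod k) v.coeff) := rfl

/-- a word-level map, as a linear map on `FA K` -/
def mapWords (f : FreeMonoid ℕ → FreeMonoid ℕ) : FA K →ₗ[K] FA K :=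
  MonoidAlgebra.mapDomainLinearMap K K f

lemma mapWords_apply (f : FreeMonoid ℕ → FreeMonoid ℕ) (v : FA K) :
    mapWords K f v = MonoidAlgebra.ofCoeff (Finsupp.mapDomain f v.coeff) := rfl

lemma Phi_mul_left (k : ℕ) (L : List ℕ) (v : FA K) :
    Phi K k (mon K L * v)
      = mon K (modifyD k 0 L)
          * mapWords K
              (fun w => FreeMonoid.ofList (modifyD k L.length (FreeMonoid.toList w))) v := by
  rw [Phi_apply, mul_eq_mapDomain, MonoidAlgebra.coeff_ofCoeff, ← Finsupp.mapDomain_comp,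
    mul_eq_mapDomain, mapWords_apply, MonoidAlgebra.coeff_ofCoeff, ← Finsupp.mapDomain_comp]
  congr 1
  congr 1
  funext w
  show FreeMonoid.ofList (modifyD k 0 (FreeMonoid.toList (FreeMonoid.ofList L * w))) = _
  have h1 : FreeMonoid.toList (FreeMonoid.ofList L * w) = L ++ FreeMonoid.toList w := rfl
  rw [h1, modifyD_append, FreeMonoid.ofList_append, Nat.zero_add]
  rfl

lemma mon_smul_single_mul (κ : K) (l A : List ℕ) (u : FA K) :
    mon K l * (κ • mon K A) * u = κ • (mon K (l ++ A) * u) := by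
  rw [mul_smul_comm, smul_mul_assoc, mon_mul_mon]

lemma mon_smul_pair_mul (κ : K) (l A B : List ℕ) (u : FA K) :
    mon K l * (κ • (mon K A + mon K B)) * u
      = κ • (mon K (l ++ A) * u + mon K (l ++ B) * u) := by
  rw [mul_smul_comm, smul_mul_assoc, mul_add, mon_mul_mon, mon_mul_mon, add_mul]

lemma emon_append_iff {k i : ℕ} (hi1 : 1 ≤ i) (hik : i + 1 ≤ k) {p q : ℕ}
    (hp : p ≤ i) (hq : q ≤ i)
    {l l₁ l₂ : List ℕ} {m : ℕ} (hm : l.length = m * 100 ^ (i ^ 2))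
    (hlen : l₁.length = l₂.length)
    (hagree : ∀ j : ℕ, j + 1 ≠ spos i p → j + 1 ≠ spos i q → l₁[j]? = l₂[j]?)
    (σ : Equiv.Perm (Fin (k + 1))) (w : List ℕ) :
    EmonP k σ (l ++ l₁ ++ w) ↔ EmonP k σ (l ++ l₂ ++ w) := by
  have key : ∀ J r : ℕ, r ≤ k → J + 1 = spos k r →
      (l ++ l₁ ++ w)[J]? = (l ++ l₂ ++ w)[J]? := by
    intro J r hr hJ
    rw [List.append_assoc, List.append_assoc]
    by_cases h1 : J < l.length
    · rw [List.getElem?_append_left h1, List.getElem?_append_left h1]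
    · push_neg at h1
      rw [List.getElem?_append_right h1, List.getElem?_append_right h1]
      by_cases h2 : J - l.length < l₁.length
      · rw [List.getElem?_append_left h2,
          List.getElem?_append_left (by omega : J - l.length < l₂.length)]
        refine hagree _ (fun hc => ?_) (fun hc => ?_)
        · exact key_arith hi1 hik hp (m := m) (r := r) (by rw [← hm]; omega)
        · exact key_arith hi1 hik hq (m := m) (r := r) (by rw [← hm]; omega)
      · push_neg at h2
        rw [List.getElem?_append_right h2,
          List.getElem?_append_right (by omega : l₂.length ≤ J - l.length), hlen]
  have hL : (l ++ l₁ ++ w).length = (l ++ l₂ ++ w).length := by simp [hlen]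
  have hidx : ∀ i' : Fin (k + 1), (cseq k ((i' : ℕ) + 1) - 1) + 1 = spos k (i' : ℕ) := by
    intro i'
    have h := cseq_succ (k := k) (r := (i' : ℕ)) (Fin.is_le i')
    have := spos_pos k (i' : ℕ)
    omega
  constructor <;> rintro ⟨hl, hP⟩
  · exact ⟨hL.symm.trans hl,
      fun i' => (key _ i' (Fin.is_le i') (hidx i')).symm.trans (hP i')⟩
  · exact ⟨hL.trans hl,
      fun i' => (key _ i' (Fin.is_le i') (hidx i')).trans (hP i')⟩

lemma not_tpos {k i n m s : ℕ} (hi1 : 1 ≤ i) (hik : i + 1 ≤ k) (hs : s ≤ i)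
    (hm : n = m * 100 ^ (i ^ 2)) : ¬ tpos k (n + (spos i s - 1)) := by
  rintro ⟨r, hr, hE⟩
  have h1 := spos_pos i s
  exact key_arith hi1 hik hs (m := m) (r := r) (by omega : m * 100 ^ (i ^ 2) + spos i s = spos k r)

lemma getElem?_modifyD_spos {k i n m s : ℕ} (hi1 : 1 ≤ i) (hik : i + 1 ≤ k) (hs : s ≤ i)
    (hm : n = m * 100 ^ (i ^ 2)) (l : List ℕ) :
    (modifyD k n l)[spos i s - 1]? = l[spos i s - 1]? := by
  rw [getElem?_modifyD]
  have h := not_tpos hi1 hik hs hm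
  cases l[spos i s - 1]? with
  | none => rfl
  | some a => simp [h]

lemma Pfil_Bk {i k : ℕ} (hi1 : 1 ≤ i) (hik : i + 1 ≤ k) (σ : Equiv.Perm (Fin (k + 1)))
    {x : FA K} (hx : x ∈ Bk K i) : Pfil K (EmonP k σ) x ∈ Bk K i := by
  have hle : Bk K i ≤ (Bk K i).comap (Pfil K (EmonP k σ)) := by
    rw [Bk]
    refine Submodule.span_le.mpr ?_
    rintro x ⟨l, z, v, ⟨m, hm⟩, hz, rfl⟩
    simp only [SetLike.mem_coe, Submodule.mem_comap]
    rcases hz with ⟨κ, l₀, p, q, hpq, hq, hlen, heq, rfl⟩ |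
      ⟨κ, l₁, l₂, p, q, e₁, e₂, hpq, hq, he, he2, hlen1, hlen2, h1p, h1q, h2p, h2q, hagree, rfl⟩
    · rw [mon_smul_single_mul, map_smul, Pfil_mul_left, ← mon_smul_single_mul]
      exact Submodule.subset_span
        ⟨l, κ • mon K l₀, _, ⟨m, hm⟩, Or.inl ⟨κ, l₀, p, q, hpq, hq, hlen, heq, rfl⟩, rfl⟩
    · rw [mon_smul_pair_mul, map_smul, map_add, Pfil_mul_left, Pfil_mul_left]
      have hpred : (fun w : List ℕ => EmonP k σ (l ++ l₂ ++ w))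
          = (fun w : List ℕ => EmonP k σ (l ++ l₁ ++ w)) := by
        funext w
        exact propext (emon_append_iff hi1 hik (by omega) hq hm
          (hlen1.trans hlen2.symm) hagree σ w).symm
      rw [hpred, ← mon_smul_pair_mul]
      exact Submodule.subset_span
        ⟨l, κ • (mon K l₁ + mon K l₂), _, ⟨m, hm⟩,
          Or.inr ⟨κ, l₁, l₂, p, q, e₁, e₂, hpq, hq, he, he2, hlen1, hlen2,
            h1p, h1q, h2p, h2q, hagree, rfl⟩, rfl⟩
  exact hle hx

lemma Phi_Bk {i k : ℕ} (hi1 : 1 ≤ i) (hik : i + 1 ≤ k)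
    {x : FA K} (hx : x ∈ Bk K i) : Phi K k x ∈ Bk K i := by
  have hle : Bk K i ≤ (Bk K i).comap (Phi K k) := by
    rw [Bk]
    refine Submodule.span_le.mpr ?_
    rintro x ⟨l, z, v, ⟨m, hm⟩, hz, rfl⟩
    simp only [SetLike.mem_coe, Submodule.mem_comap]
    rcases hz with ⟨κ, l₀, p, q, hpq, hq, hlen, heq, rfl⟩ |
      ⟨κ, l₁, l₂, p, q, e₁, e₂, hpq, hq, he, he2, hlen1, hlen2, h1p, h1q, h2p, h2q, hagree, rfl⟩
    · rw [mon_smul_single_mul, map_smul, Phi_mul_left, modifyD_append, Nat.zero_add,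
        ← mon_smul_single_mul]
      refine Submodule.subset_span
        ⟨modifyD k 0 l, κ • mon K (modifyD k l.length l₀), _,
          ⟨m, by rw [length_modifyD]; exact hm⟩,
          Or.inl ⟨κ, modifyD k l.length l₀, p, q, hpq, hq,
            by rw [length_modifyD]; exact hlen, ?_, rfl⟩, rfl⟩
      show (modifyD k l.length l₀)[spos i p - 1]? = (modifyD k l.length l₀)[spos i q - 1]?
      rw [getElem?_modifyD_spos hi1 hik (by omega) hm,
        getElem?_modifyD_spos hi1 hik hq hm]
      exact heq
    · rw [mon_smul_pair_mul, map_smul, map_add, Phi_mul_left, Phi_mul_left,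
        modifyD_append, modifyD_append, Nat.zero_add]
      have hL12 : (l ++ l₁).length = (l ++ l₂).length := by
        simp [hlen1, hlen2]
      rw [hL12, ← mon_smul_pair_mul]
      refine Submodule.subset_span
        ⟨modifyD k 0 l,
          κ • (mon K (modifyD k l.length l₁) + mon K (modifyD k l.length l₂)), _,
          ⟨m, by rw [length_modifyD]; exact hm⟩,
          Or.inr ⟨κ, modifyD k l.length l₁, modifyD k l.length l₂, p, q, e₁, e₂,
            hpq, hq, he, he2,
            by rw [length_modifyD]; exact hlen1,
            by rw [length_modifyD]; exact hlen2, ?_, ?_, ?_, ?_, ?_, rfl⟩, rfl⟩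
      · show (modifyD k l.length l₁)[spos i p - 1]? = some e₁
        rw [getElem?_modifyD_spos hi1 hik (by omega) hm]; exact h1p
      · show (modifyD k l.length l₁)[spos i q - 1]? = some e₂
        rw [getElem?_modifyD_spos hi1 hik hq hm]; exact h1q
      · show (modifyD k l.length l₂)[spos i p - 1]? = some e₂
        rw [getElem?_modifyD_spos hi1 hik (by omega) hm]; exact h2p
      · show (modifyD k l.length l₂)[spos i q - 1]? = some e₁
        rw [getElem?_modifyD_spos hi1 hik hq hm]; exact h2q
      · intro j hjp hjq
        show (modifyD k l.length l₁)[j]? = (modifyD k l.length l₂)[j]?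
        rw [getElem?_modifyD, getElem?_modifyD, hagree j hjp hjq]
  exact hle hx


lemma Phi_mon (k : ℕ) (L : List ℕ) : Phi K k (mon K L) = mon K (modifyD k 0 L) := by
  rw [Phi_apply, mon, MonoidAlgebra.coeff_single, Finsupp.mapDomain_single]
  rfl

lemma emon_unique {k : ℕ} {σ τ : Equiv.Perm (Fin (k + 1))} {l : List ℕ}
    (hσ : EmonP k σ l) (hτ : EmonP k τ l) : σ = τ := by
  apply Equiv.ext
  intro i
  have h1 := hσ.2 i
  have h2 := hτ.2 i
  rw [h1] at h2
  exact Fin.ext (cseq_inj (Fin.is_le _) (Fin.is_le _) (Option.some_injective _ h2))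

lemma emon_swap {k p q : ℕ} (hpq : p < q) (hq : q ≤ k)
    {y₁ y₂ : List ℕ} {a b : ℕ}
    (h1p : y₁[spos k p - 1]? = some a) (h1q : y₁[spos k q - 1]? = some b)
    (h2p : y₂[spos k p - 1]? = some b) (h2q : y₂[spos k q - 1]? = some a)
    (hlen : y₁.length = y₂.length)
    (hagree : ∀ j : ℕ, j + 1 ≠ spos k p → j + 1 ≠ spos k q → y₁[j]? = y₂[j]?)
    {σ : Equiv.Perm (Fin (k + 1))} (hσ : EmonP k σ y₁) :
    EmonP k (σ * Equiv.swap ⟨p, by omega⟩ ⟨q, by omega⟩) y₂ := by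
  obtain ⟨hl, hP⟩ := hσ
  refine ⟨hlen ▸ hl, fun i => ?_⟩
  have hidx : ∀ r : Fin (k + 1), cseq k ((r : ℕ) + 1) - 1 = spos k (r : ℕ) - 1 :=
    fun r => by rw [cseq_succ (Fin.is_le r)]
  rw [hidx]
  rcases eq_or_ne i ⟨p, by omega⟩ with rfl | hip
  · rw [Equiv.Perm.mul_apply, Equiv.swap_apply_left]
    have t := hP ⟨q, by omega⟩
    rw [hidx] at t
    rw [h1q] at t
    have hb : b = cseq k ((σ ⟨q, by omega⟩ : Fin (k + 1)) : ℕ) := Option.some_injective _ t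
    show y₂[spos k p - 1]? = _
    rw [h2p, hb]
  · rcases eq_or_ne i ⟨q, by omega⟩ with rfl | hiq
    · rw [Equiv.Perm.mul_apply, Equiv.swap_apply_right]
      have t := hP ⟨p, by omega⟩
      rw [hidx] at t
      rw [h1p] at t
      have ha : a = cseq k ((σ ⟨p, by omega⟩ : Fin (k + 1)) : ℕ) := Option.some_injective _ t
      show y₂[spos k q - 1]? = _
      rw [h2q, ha]
    · rw [Equiv.Perm.mul_apply, Equiv.swap_apply_of_ne_of_ne hip hiq]
      have hvp : (i : ℕ) ≠ p := fun h => hip (Fin.ext h)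
      have hvq : (i : ℕ) ≠ q := fun h => hiq (Fin.ext h)
      have hpos := spos_pos k (i : ℕ)
      have hj1 : (spos k (i : ℕ) - 1) + 1 ≠ spos k p := by
        intro hc
        exact hvp (spos_inj (k := k) (by omega))
      have hj2 : (spos k (i : ℕ) - 1) + 1 ≠ spos k q := by
        intro hc
        exact hvq (spos_inj (k := k) (by omega))
      rw [← hagree _ hj1 hj2]
      have t := hP i
      rw [hidx] at t
      exact t

lemma modifyD_eq_of_agree {k p q : ℕ} (hpk : p ≤ k) (hqk : q ≤ k)
    {y₁ y₂ : List ℕ} (hlen : y₁.length = y₂.length)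
    (hagree : ∀ j : ℕ, j + 1 ≠ spos k p → j + 1 ≠ spos k q → y₁[j]? = y₂[j]?) :
    modifyD k 0 y₁ = modifyD k 0 y₂ := by
  apply List.ext_getElem?
  intro j
  rw [getElem?_modifyD, getElem?_modifyD, Nat.zero_add]
  by_cases ht : tpos k j
  · by_cases hj : j < y₁.length
    · rw [List.getElem?_eq_getElem hj, List.getElem?_eq_getElem (by omega : j < y₂.length)]
      simp [ht]
    · push_neg at hj
      rw [List.getElem?_eq_none hj, List.getElem?_eq_none (by omega : y₂.length ≤ j)]
  · have h1 : j + 1 ≠ spos k p := fun h => ht ⟨p, hpk, h⟩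
    have h2 : j + 1 ≠ spos k q := fun h => ht ⟨q, hqk, h⟩
    rw [hagree j h1 h2]

lemma modifyD_eq_self {k : ℕ} {l : List ℕ} (h : EmonP k 1 l) : modifyD k 0 l = l := by
  apply List.ext_getElem?
  intro j
  rw [getElem?_modifyD, Nat.zero_add]
  by_cases ht : tpos k j
  · obtain ⟨r, hr, hj⟩ := ht
    have hP : l[cseq k (r + 1) - 1]? = some (cseq k (((1 : Equiv.Perm (Fin (k+1))) ⟨r, by omega⟩ : Fin (k + 1)) : ℕ)) :=
      h.2 ⟨r, by omega⟩
    rw [cseq_succ hr] at hP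
    have hidx : spos k r - 1 = j := by have := spos_pos k r; omega
    rw [hidx] at hP
    have hone : ((1 : Equiv.Perm (Fin (k+1))) ⟨r, by omega⟩ : Fin (k + 1)) = ⟨r, by omega⟩ := rfl
    rw [hP]
    simp only [Option.map_some]
    congr 1
    rw [if_pos ⟨r, hr, hj⟩, gval_eq hr hj, hone]
  · cases hV : l[j]? with
    | none => rfl
    | some a => simp [ht]

lemma Pfil_eq_zero {P : List ℕ → Prop} (h : ∀ l : List ℕ, ¬ P l) (v : FA K) :
    Pfil K P v = 0 := by
  ext s
  rw [Pfil_apply, if_neg (h _)]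
  rfl

open scoped Classical in
lemma Pfil_single_code {P : List ℕ → Prop} {c : List ℕ}
    (h : ∀ l : List ℕ, P l → l = c) (v : FA K) :
    Pfil K P v = if P c then (v.coeff (FreeMonoid.ofList c)) • mon K c else 0 := by
  ext s
  rw [Pfil_apply]
  by_cases hs : P (FreeMonoid.toList s)
  · have hcs : FreeMonoid.ofList c = s := by
      rw [← h _ hs, FreeMonoid.ofList_toList]
    have hc : P c := by rw [← h _ hs]; exact hs
    rw [if_pos hs, if_pos hc, MonoidAlgebra.coeff_smul_apply]
    show v.coeff s = v.coeff (FreeMonoid.ofList c) • (Finsupp.single (FreeMonoid.ofList c) 1 : FreeMonoid ℕ →₀ K) s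
    rw [hcs, Finsupp.single_eq_same, smul_eq_mul, mul_one]
  · rw [if_neg hs]
    by_cases hc : P c
    · rw [if_pos hc]
      have hne : FreeMonoid.ofList c ≠ s := by
        intro hcs
        apply hs
        rw [← hcs, FreeMonoid.toList_ofList]
        exact hc
      show (0 : K) = v.coeff (FreeMonoid.ofList c) • (Finsupp.single (FreeMonoid.ofList c) 1 : FreeMonoid ℕ →₀ K) s
      rw [Finsupp.single_eq_of_ne' hne, smul_zero]
    · rw [if_neg hc]
      rfl

open scoped Classical in
lemma Pfil_long {k : ℕ} (σ : Equiv.Perm (Fin (k + 1))) {L : List ℕ}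
    (hL : L.length = 100 ^ (k ^ 2) - 1) (v : FA K) :
    Pfil K (EmonP k σ) (mon K L * v)
      = if EmonP k σ L then (v.coeff 1) • mon K L else 0 := by
  rw [Pfil_mul_left, Pfil_single_code (K := K) (c := ([] : List ℕ))
    (h := fun w hw => by
      have hlw := hw.1
      rw [List.length_append, hL] at hlw
      have hN : 0 < 100 ^ (k ^ 2) := Nat.pow_pos (by norm_num)
      exact List.length_eq_zero_iff.mp (by omega))]
  rw [List.append_nil]
  by_cases h : EmonP k σ L
  · rw [if_pos h, if_pos h, mul_smul_comm, mon_mul_mon, List.append_nil]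
    rfl
  · rw [if_neg h, if_neg h, mul_zero]

lemma Pfil_toolong {k : ℕ} (σ : Equiv.Perm (Fin (k + 1))) {L : List ℕ}
    (hL : 100 ^ (k ^ 2) - 1 < L.length) (v : FA K) :
    Pfil K (EmonP k σ) (mon K L * v) = 0 := by
  rw [Pfil_mul_left, Pfil_eq_zero, mul_zero]
  intro w hw
  have := hw.1
  rw [List.length_append] at this
  omega

lemma Phi_Pfil_one {k : ℕ} (x : FA K) :
    Phi K k (Pfil K (EmonP k 1) x) = Pfil K (EmonP k 1) x := by
  induction x using MonoidAlgebra.induction_linear with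
  | zero => rw [map_zero, map_zero]
  | add f g hf hg => rw [map_add, map_add, hf, hg]
  | single s c =>
      classical
      by_cases h : EmonP k 1 (FreeMonoid.toList s)
      · have e : Pfil K (EmonP k 1) (MonoidAlgebra.single s c) = MonoidAlgebra.single s c := by
          ext t
          rw [Pfil_apply]
          by_cases ht : t = s
          · subst ht; rw [if_pos h]
          · rw [MonoidAlgebra.coeff_single, Finsupp.single_apply, if_neg (Ne.symm ht)]
            split_ifs <;> rfl
        rw [e, Phi_apply, MonoidAlgebra.coeff_single, Finsupp.mapDomain_single,
          MonoidAlgebra.ofCoeff_single]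
        congr 1
        show FreeMonoid.ofList (modifyD k 0 (FreeMonoid.toList s)) = s
        rw [modifyD_eq_self h, FreeMonoid.ofList_toList]
      · have e : Pfil K (EmonP k 1) (MonoidAlgebra.single s c) = 0 := by
          ext t
          rw [Pfil_apply]
          by_cases ht : t = s
          · subst ht; rw [if_neg h]; rfl
          · rw [MonoidAlgebra.coeff_single, Finsupp.single_apply, if_neg (Ne.symm ht)]
            split_ifs <;> rfl
        rw [e, map_zero]

lemma Pfil_eq_zero_of_coeff {P : List ℕ → Prop} {a : FA K}
    (h : ∀ l : List ℕ, P l → a.coeff (FreeMonoid.ofList l) = 0) : Pfil K P a = 0 := by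
  ext s
  rw [Pfil_apply]
  by_cases hs : P (FreeMonoid.toList s)
  · rw [if_pos hs]
    have := h _ hs
    rw [FreeMonoid.ofList_toList] at this
    rw [this]
    rfl
  · rw [if_neg hs]
    rfl

lemma theta_Bk {k : ℕ} {x : FA K} (hx : x ∈ Bk K k) :
    ∑ σ : Equiv.Perm (Fin (k + 1)),
      ((Equiv.Perm.sign σ : ℤ) : K) • Phi K k (Pfil K (EmonP k σ) x) = 0 := by
  classical
  set T : FA K →ₗ[K] FA K :=
    ∑ σ : Equiv.Perm (Fin (k + 1)),
      ((Equiv.Perm.sign σ : ℤ) : K) • ((Phi K k).comp (Pfil K (EmonP k σ))) with hT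
  have happ : ∀ y : FA K, T y = ∑ σ : Equiv.Perm (Fin (k + 1)),
      ((Equiv.Perm.sign σ : ℤ) : K) • Phi K k (Pfil K (EmonP k σ) y) := by
    intro y
    rw [hT, LinearMap.sum_apply]
    refine Finset.sum_congr rfl (fun σ _ => ?_)
    rw [LinearMap.smul_apply, LinearMap.comp_apply]
  rw [← happ]
  have hker : Bk K k ≤ LinearMap.ker T := by
    rw [Bk]
    refine Submodule.span_le.mpr ?_
    rintro x ⟨l, z, v, ⟨m, hm⟩, hz, rfl⟩
    simp only [SetLike.mem_coe, LinearMap.mem_ker]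
    rw [happ]
    have hN : 0 < 100 ^ (k ^ 2) := Nat.pow_pos (by norm_num)
    rcases Nat.eq_zero_or_pos m with hm0 | hm1
    · -- short left factor : `l = []`
      subst hm0
      have hl : l = [] := List.length_eq_zero_iff.mp (by omega)
      subst hl
      rcases hz with ⟨κ, l₀, p, q, hpq, hq, hlen, heq, rfl⟩ |
        ⟨κ, l₁, l₂, p, q, e₁, e₂, hpq, hq, he, he2, hlen1, hlen2, h1p, h1q, h2p, h2q, hagree, rfl⟩
      · -- type 1 : no pattern matches
        have hno : ∀ σ : Equiv.Perm (Fin (k + 1)), ¬ EmonP k σ l₀ := by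
          intro σ hσ
          have h1 : l₀[cseq k (p + 1) - 1]? =
              some (cseq k ((σ ⟨p, by omega⟩ : Fin (k + 1)) : ℕ)) := hσ.2 ⟨p, by omega⟩
          have h2 : l₀[cseq k (q + 1) - 1]? =
              some (cseq k ((σ ⟨q, by omega⟩ : Fin (k + 1)) : ℕ)) := hσ.2 ⟨q, by omega⟩
          rw [cseq_succ (by omega : p ≤ k)] at h1
          rw [cseq_succ hq] at h2
          have heq' : l₀[spos k p - 1]? = l₀[spos k q - 1]? := heq
          rw [h1, h2] at heq'
          have := cseq_inj (Fin.is_le _) (Fin.is_le _) (Option.some_injective _ heq')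
          have hfe : (⟨p, by omega⟩ : Fin (k + 1)) = ⟨q, by omega⟩ :=
            σ.injective (Fin.ext this)
          have : p = q := congrArg Fin.val hfe
          omega
        refine Finset.sum_eq_zero (fun σ _ => ?_)
        rw [mon_smul_single_mul, List.nil_append, map_smul, Pfil_long K σ hlen,
          if_neg (hno σ), smul_zero, map_zero, smul_zero]
      · -- type 2
        have hterm0 : ∀ σ : Equiv.Perm (Fin (k + 1)),
            Pfil K (EmonP k σ) (mon K [] * (κ • (mon K l₁ + mon K l₂)) * v)
              = κ • ((if EmonP k σ l₁ then (v.coeff 1) • mon K l₁ else 0)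
                  + (if EmonP k σ l₂ then (v.coeff 1) • mon K l₂ else 0)) := by
          intro σ
          rw [mon_smul_pair_mul, List.nil_append, List.nil_append, map_smul, map_add,
            Pfil_long K σ hlen1, Pfil_long K σ hlen2]
        by_cases hE : ∃ σ₀, EmonP k σ₀ l₁
        · obtain ⟨σ₀, hσ₀⟩ := hE
          have hpk : p ≤ k := by omega
          set pf : Fin (k + 1) := ⟨p, by omega⟩ with hpf
          set qf : Fin (k + 1) := ⟨q, by omega⟩ with hqf
          have hpfqf : pf ≠ qf := Fin.ne_of_val_ne (Nat.ne_of_lt hpq)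
          set τ : Equiv.Perm (Fin (k + 1)) := σ₀ * Equiv.swap pf qf with hτdef
          have hτ : EmonP k τ l₂ :=
            emon_swap hpq hq h1p h1q h2p h2q (hlen1.trans hlen2.symm) hagree hσ₀
          have hστ : σ₀ ≠ τ := by
            intro hc
            have hsw : Equiv.swap pf qf = 1 := mul_eq_left.mp hc.symm
            have h2 : qf = pf := by
              have h3 := DFunLike.congr_fun hsw pf
              rwa [Equiv.swap_apply_left, Equiv.Perm.one_apply] at h3
            exact hpfqf h2.symm
          have hu1 : ∀ σ, EmonP k σ l₁ ↔ σ = σ₀ :=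
            fun σ => ⟨fun h => emon_unique h hσ₀, fun h => h ▸ hσ₀⟩
          have hu2 : ∀ σ, EmonP k σ l₂ ↔ σ = τ :=
            fun σ => ⟨fun h => emon_unique h hτ, fun h => h ▸ hτ⟩
          have hMeq : modifyD k 0 l₁ = modifyD k 0 l₂ :=
            modifyD_eq_of_agree hpk hq (hlen1.trans hlen2.symm) hagree
          have hsign : ((Equiv.Perm.sign τ : ℤ) : K)
              = - ((Equiv.Perm.sign σ₀ : ℤ) : K) := by
            rw [hτdef, Equiv.Perm.sign_mul, Equiv.Perm.sign_swap hpfqf]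
            push_cast
            ring
          have hstep : ∀ σ : Equiv.Perm (Fin (k + 1)),
              ((Equiv.Perm.sign σ : ℤ) : K) • Phi K k
                (Pfil K (EmonP k σ) (mon K [] * (κ • (mon K l₁ + mon K l₂)) * v))
              = (if σ = σ₀ then
                  ((Equiv.Perm.sign σ : ℤ) : K) • κ • (v.coeff 1) • Phi K k (mon K l₁) else 0)
                + (if σ = τ then
                  ((Equiv.Perm.sign σ : ℤ) : K) • κ • (v.coeff 1) • Phi K k (mon K l₂) else 0) := by
            intro σ
            rw [hterm0 σ]
            by_cases h1 : σ = σ₀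
            · have hn2 : ¬ σ = τ := fun hc => hστ (h1.symm.trans hc)
              rw [if_pos ((hu1 σ).mpr h1), if_neg (fun hc => hn2 ((hu2 σ).mp hc)),
                if_pos h1, if_neg hn2]
              rw [add_zero, add_zero, map_smul, map_smul]
            · by_cases h2 : σ = τ
              · rw [if_neg (fun hc => h1 ((hu1 σ).mp hc)), if_pos ((hu2 σ).mpr h2),
                  if_neg h1, if_pos h2]
                rw [zero_add, zero_add, map_smul, map_smul]
              · rw [if_neg (fun hc => h1 ((hu1 σ).mp hc)),
                  if_neg (fun hc => h2 ((hu2 σ).mp hc)), if_neg h1, if_neg h2]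
                rw [add_zero, smul_zero, map_zero, smul_zero]
          calc ∑ σ : Equiv.Perm (Fin (k + 1)), ((Equiv.Perm.sign σ : ℤ) : K) • Phi K k
                (Pfil K (EmonP k σ) (mon K [] * (κ • (mon K l₁ + mon K l₂)) * v))
              = ∑ σ : Equiv.Perm (Fin (k + 1)),
                ((if σ = σ₀ then
                  ((Equiv.Perm.sign σ : ℤ) : K) • κ • (v.coeff 1) • Phi K k (mon K l₁) else 0)
                + (if σ = τ then
                  ((Equiv.Perm.sign σ : ℤ) : K) • κ • (v.coeff 1) • Phi K k (mon K l₂) else 0)) :=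
                Finset.sum_congr rfl (fun σ _ => hstep σ)
            _ = 0 := by
                rw [Finset.sum_add_distrib, Finset.sum_ite_eq' Finset.univ σ₀,
                  Finset.sum_ite_eq' Finset.univ τ, if_pos (Finset.mem_univ _),
                  if_pos (Finset.mem_univ _)]
                rw [Phi_mon, Phi_mon, hMeq, hsign, neg_smul]
                exact add_neg_cancel _
        · push_neg at hE
          have hno2 : ∀ σ : Equiv.Perm (Fin (k + 1)), ¬ EmonP k σ l₂ := by
            intro σ hσ2
            exact hE _ (emon_swap hpq hq h2p h2q h1p h1q (hlen2.trans hlen1.symm)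
              (fun j hj1 hj2 => (hagree j hj1 hj2).symm) hσ2)
          refine Finset.sum_eq_zero (fun σ _ => ?_)
          rw [hterm0 σ, if_neg (hE σ), if_neg (hno2 σ), add_zero, smul_zero, map_zero,
            smul_zero]
    · -- long left factor : everything is filtered away
      have hmN : 100 ^ (k ^ 2) ≤ m * 100 ^ (k ^ 2) := Nat.le_mul_of_pos_left _ hm1
      rcases hz with ⟨κ, l₀, p, q, hpq, hq, hlen, heq, rfl⟩ |
        ⟨κ, l₁, l₂, p, q, e₁, e₂, hpq, hq, he, he2, hlen1, hlen2, h1p, h1q, h2p, h2q, hagree, rfl⟩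
      · refine Finset.sum_eq_zero (fun σ _ => ?_)
        rw [mon_smul_single_mul, map_smul,
          Pfil_toolong K σ (by rw [List.length_append, hm, hlen]; omega) v,
          smul_zero, map_zero, smul_zero]
      · refine Finset.sum_eq_zero (fun σ _ => ?_)
        rw [mon_smul_pair_mul, map_smul, map_add,
          Pfil_toolong K σ (by rw [List.length_append, hm, hlen1]; omega) v,
          Pfil_toolong K σ (by rw [List.length_append, hm, hlen2]; omega) v,
          add_zero, smul_zero, map_zero, smul_zero]
  exact LinearMap.mem_ker.mp (hker hx)

lemma mem_sum_submodules {ι : Type} {s : Finset ι} {p : ι → Submodule K (FA K)} {x : FA K}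
    (hx : x ∈ ∑ i ∈ s, p i) :
    ∃ f : ι → FA K, (∀ i ∈ s, f i ∈ p i) ∧ x = ∑ i ∈ s, f i := by
  classical
  induction s using Finset.induction_on generalizing x with
  | empty =>
      refine ⟨fun _ => 0, fun i hi => absurd hi (Finset.notMem_empty i), ?_⟩
      rw [Finset.sum_empty] at hx ⊢
      simpa using hx
  | @insert i s hni ih =>
      rw [Finset.sum_insert hni, Submodule.add_eq_sup, Submodule.mem_sup] at hx
      obtain ⟨y, hy, z, hz, rfl⟩ := hx
      obtain ⟨f, hf, rfl⟩ := ih hz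
      refine ⟨Function.update f i y, fun j hj => ?_, ?_⟩
      · rcases Finset.mem_insert.mp hj with rfl | hj'
        · rw [Function.update_self]; exact hy
        · rw [Function.update_of_ne (fun h : j = i => hni (h ▸ hj'))]; exact hf j hj'
      · rw [Finset.sum_insert hni, Function.update_self]
        congr 1
        refine Finset.sum_congr rfl (fun j hj => ?_)
        rw [Function.update_of_ne (fun h : j = i => hni (h ▸ hj))]

lemma Bk_le_Bsum {i m : ℕ} (h1 : 1 ≤ i) (h2 : i ≤ m) : Bk K i ≤ Bsum K m := by
  have hmem : i ∈ Finset.Icc 1 m := Finset.mem_Icc.mpr ⟨h1, h2⟩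
  have hsum : Bsum K m
      = Bk K i ⊔ (∑ j ∈ (Finset.Icc 1 m).erase i, Bk K j) := by
    rw [Bsum, ← Finset.add_sum_erase _ _ hmem, Submodule.add_eq_sup]
  rw [hsum]
  exact le_sup_left

end L8

/-- Lemma 8: let `a ∈ A(100^{k²} − 1)` with `a ∈ B_1 + ⋯ + B_k`, let `b̄` be the sum of
the basis summands of `a` lying in `E`, and suppose `a` has no basis summands in `E^σ`
for any non-identity permutation `σ` of `{c_0, …, c_k}`.  Then `b̄ ∈ B_1 + ⋯ + B_{k-1}`. -/
theorem summands_in_E (K : Type) [Field K] (k : ℕ) (hk : 1 ≤ k) (a : FA K)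
    (haA : a ∈ Agr K (100 ^ (k ^ 2) - 1)) (haB : a ∈ Bsum K k)
    (hσ : ∀ σ : Equiv.Perm (Fin (k + 1)), σ ≠ 1 →
      ∀ l : List ℕ, EmonP k σ l → a.coeff (FreeMonoid.ofList l) = 0) :
    summandsIn K (EmonP k 1) a ∈ Bsum K (k - 1) := by
  classical
  obtain ⟨k', rfl⟩ : ∃ k', k = k' + 1 := ⟨k - 1, by omega⟩
  have hsum_eq : summandsIn K (EmonP (k' + 1) 1) a = L8.Pfil K (EmonP (k' + 1) 1) a := rfl
  rw [show (k' + 1) - 1 = k' from rfl, hsum_eq]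
  obtain ⟨b, hb, hab⟩ := L8.mem_sum_submodules K haB
  have hsplit : Finset.Icc 1 (k' + 1) = insert (k' + 1) (Finset.Icc 1 k') := by
    ext j
    simp only [Finset.mem_Icc, Finset.mem_insert]
    omega
  have hnotmem : (k' + 1) ∉ Finset.Icc 1 k' := by
    simp only [Finset.mem_Icc]
    omega
  rw [hsplit, Finset.sum_insert hnotmem] at hab
  have hb' : ∀ i ∈ Finset.Icc 1 k', b i ∈ Bk K i := fun i hi =>
    hb i (by rw [hsplit]; exact Finset.mem_insert_of_mem hi)
  have hbk : b (k' + 1) ∈ Bk K (k' + 1) :=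
    hb _ (by rw [hsplit]; exact Finset.mem_insert_self _ _)
  have hP1small : ∀ i ∈ Finset.Icc 1 k',
      L8.Pfil K (EmonP (k' + 1) 1) (b i) ∈ Bsum K k' := by
    intro i hi
    obtain ⟨h1, h2⟩ := Finset.mem_Icc.mp hi
    exact L8.Bk_le_Bsum K h1 h2 (L8.Pfil_Bk K h1 (by omega) 1 (hb' i hi))
  have hPhismall : ∀ (σ : Equiv.Perm (Fin (k' + 1 + 1))), ∀ i ∈ Finset.Icc 1 k',
      L8.Phi K (k' + 1) (L8.Pfil K (EmonP (k' + 1) σ) (b i)) ∈ Bsum K k' := by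
    intro σ i hi
    obtain ⟨h1, h2⟩ := Finset.mem_Icc.mp hi
    exact L8.Bk_le_Bsum K h1 h2
      (L8.Phi_Bk K h1 (by omega) (L8.Pfil_Bk K h1 (by omega) σ (hb' i hi)))
  have hPa : ∀ σ : Equiv.Perm (Fin (k' + 1 + 1)), σ ≠ 1 →
      L8.Pfil K (EmonP (k' + 1) σ) a = 0 := fun σ hσ1 =>
    L8.Pfil_eq_zero_of_coeff K (hσ σ hσ1)
  have hPbk : ∀ σ : Equiv.Perm (Fin (k' + 1 + 1)), σ ≠ 1 →
      L8.Phi K (k' + 1) (L8.Pfil K (EmonP (k' + 1) σ) (b (k' + 1))) ∈ Bsum K k' := by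
    intro σ hσ1
    have hbke : b (k' + 1) = a - ∑ i ∈ Finset.Icc 1 k', b i := by
      rw [hab]; abel
    rw [hbke, map_sub, hPa σ hσ1, zero_sub, map_neg, map_sum, map_sum]
    exact Submodule.neg_mem _ (Submodule.sum_mem _ (fun i hi => hPhismall σ i hi))
  have htheta := L8.theta_Bk K hbk
  rw [← Finset.add_sum_erase _ _
    (Finset.mem_univ (1 : Equiv.Perm (Fin (k' + 1 + 1))))] at htheta
  rw [Equiv.Perm.sign_one, L8.Phi_Pfil_one] at htheta
  simp only [Units.val_one, Int.cast_one, one_smul] at htheta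
  have hP1bk : L8.Pfil K (EmonP (k' + 1) 1) (b (k' + 1)) ∈ Bsum K k' := by
    rw [eq_neg_of_add_eq_zero_left htheta]
    exact Submodule.neg_mem _ (Submodule.sum_mem _ (fun σ hσ' =>
      Submodule.smul_mem _ _ (hPbk σ (Finset.ne_of_mem_erase hσ'))))
  rw [hab, map_add, map_sum]
  exact Submodule.add_mem _ hP1bk (Submodule.sum_mem _ hP1small)
end
end
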